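/- arXiv:math/0511345 — 5 statements merged into one kernel-verified Lean document; each statement's English description precedes it below -/
import Mathlib

section
/- Let R = F_p[[a,b,c,d]], let u ∈ a·F_p[[a]] be algebraically independent of a over F_p, and let I be the ideal of R generated by c - ab and d - u(a)·b. Then the composite map S = F_p[[b,c,d]] → R → R/I is injective; i.e., I ∩ F_p[[b,c,d]] = 0. -/
open MvPowerSeries Finsupp

noncomputable section
variable {K : Type*} [CommRing K]

def mk4 (a b c d : ℕ) : Fin 4 →₀ ℕ := Finsupp.equivFunOnFinite.symm ![a, b, c, d]

@[simp] lemma mk4_apply (a b c d : ℕ) (x : Fin 4) : mk4 a b c d x = ![a, b, c, d] x := rfl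

lemma mk4_eta (n : Fin 4 →₀ ℕ) : n = mk4 (n 0) (n 1) (n 2) (n 3) := by
  ext x; fin_cases x <;> simp

open Classical in
def msl (F : MvPowerSeries (Fin 4) K) (i j k : ℕ) : MvPowerSeries (Fin 4) K :=
  fun n => if n 1 = 0 ∧ n 2 = 0 ∧ n 3 = 0 then coeff (mk4 (n 0) i j k) F else 0

open Classical in
lemma coeff_msl (F : MvPowerSeries (Fin 4) K) (i j k : ℕ) (n : Fin 4 →₀ ℕ) :
    coeff n (msl F i j k) =
      if n 1 = 0 ∧ n 2 = 0 ∧ n 3 = 0 then coeff (mk4 (n 0) i j k) F else 0 := rfl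

lemma coeff_mul_X' (n : Fin 4 →₀ ℕ) (F : MvPowerSeries (Fin 4) K) (s : Fin 4) :
    coeff n (F * X s) = if n s ≠ 0 then coeff (n - Finsupp.single s 1) F else 0 := by
  rw [X, coeff_mul_monomial]
  simp only [mul_one, Finsupp.single_le_iff, Nat.one_le_iff_ne_zero]

lemma msl_add (F G : MvPowerSeries (Fin 4) K) (i j k : ℕ) :
    msl (F + G) i j k = msl F i j k + msl G i j k := by
  ext n; classical
  simp only [coeff_msl, map_add]
  split <;> simp

lemma msl_sub (F G : MvPowerSeries (Fin 4) K) (i j k : ℕ) :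
    msl (F - G) i j k = msl F i j k - msl G i j k := by
  ext n; classical
  simp only [coeff_msl, map_sub]
  split <;> simp

lemma msl_mul_X1_succ (F : MvPowerSeries (Fin 4) K) (i j k : ℕ) :
    msl (F * X 1) (i + 1) j k = msl F i j k := by
  ext n; classical
  simp only [coeff_msl, coeff_mul_X']
  split
  · rw [if_pos (by simp)]
    have h : mk4 (n 0) (i+1) j k - Finsupp.single 1 1 = mk4 (n 0) i j k := by
      ext x; rw [Finsupp.tsub_apply]; fin_cases x <;> simp [Finsupp.single_apply]
    rw [h]
  · rfl

lemma msl_mul_X1_zero (F : MvPowerSeries (Fin 4) K) (j k : ℕ) :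
    msl (F * X 1) 0 j k = 0 := by
  ext n; classical
  simp only [coeff_msl, coeff_mul_X', map_zero]
  split <;> simp

lemma msl_mul_X2_succ (F : MvPowerSeries (Fin 4) K) (i j k : ℕ) :
    msl (F * X 2) i (j + 1) k = msl F i j k := by
  ext n; classical
  simp only [coeff_msl, coeff_mul_X']
  split
  · rw [if_pos (by simp)]
    have h : mk4 (n 0) i (j+1) k - Finsupp.single 2 1 = mk4 (n 0) i j k := by
      ext x; rw [Finsupp.tsub_apply]; fin_cases x <;> simp [Finsupp.single_apply]
    rw [h]
  · rfl

lemma msl_mul_X2_zero (F : MvPowerSeries (Fin 4) K) (i k : ℕ) :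
    msl (F * X 2) i 0 k = 0 := by
  ext n; classical
  simp only [coeff_msl, coeff_mul_X', map_zero]
  split <;> simp

lemma msl_mul_X3_succ (F : MvPowerSeries (Fin 4) K) (i j k : ℕ) :
    msl (F * X 3) i j (k + 1) = msl F i j k := by
  ext n; classical
  simp only [coeff_msl, coeff_mul_X']
  split
  · rw [if_pos (by simp)]
    have h : mk4 (n 0) i j (k+1) - Finsupp.single 3 1 = mk4 (n 0) i j k := by
      ext x; rw [Finsupp.tsub_apply]; fin_cases x <;> simp [Finsupp.single_apply]
    rw [h]
  · rfl

lemma msl_mul_X3_zero (F : MvPowerSeries (Fin 4) K) (i j : ℕ) :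
    msl (F * X 3) i j 0 = 0 := by
  ext n; classical
  simp only [coeff_msl, coeff_mul_X', map_zero]
  split <;> simp

lemma msl_mul_X0 (F : MvPowerSeries (Fin 4) K) (i j k : ℕ) :
    msl (F * X 0) i j k = X 0 * msl F i j k := by
  ext n; classical
  rw [mul_comm (X 0) (msl F i j k)]
  simp only [coeff_msl, coeff_mul_X', mk4_apply, Matrix.cons_val_zero]
  by_cases hP : n 1 = 0 ∧ n 2 = 0 ∧ n 3 = 0
  · rw [if_pos hP]
    by_cases h0 : n 0 ≠ 0
    · simp only [ne_eq, h0, not_false_eq_true, if_true]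
      rw [if_pos]
      · have h : mk4 (n 0) i j k - Finsupp.single 0 1 = mk4 (n 0 - 1) i j k := by
          ext x; rw [Finsupp.tsub_apply]; fin_cases x <;> simp [Finsupp.single_apply]
        have h2 : (n - Finsupp.single (0 : Fin 4) (1 : ℕ)) 0 = n 0 - 1 := by
          rw [Finsupp.tsub_apply]; simp [Finsupp.single_apply]
        rw [h, h2]
      · refine ⟨?_, ?_, ?_⟩ <;> rw [Finsupp.tsub_apply] <;>
          simp [Finsupp.single_apply, hP.1, hP.2.1, hP.2.2]
    · simp only [ne_eq, Decidable.not_not] at h0; simp [h0]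
  · rw [if_neg hP]
    by_cases h0 : n 0 ≠ 0
    · rw [if_pos h0, if_neg]
      intro hc
      apply hP
      obtain ⟨h1, h2, h3⟩ := hc
      rw [Finsupp.tsub_apply] at h1 h2 h3
      simp only [Finsupp.single_apply] at h1 h2 h3
      norm_num at h1 h2 h3
      exact ⟨h1, h2, h3⟩
    · rw [if_neg h0]

/-- Coefficient of a product with a series `u` supported on variable 0 only,
at a monomial `mk4 A b c d`. -/
lemma coeff_mk4_mul_u (u : MvPowerSeries (Fin 4) K)
    (hu : ∀ m : Fin 4 →₀ ℕ, (m 1 ≠ 0 ∨ m 2 ≠ 0 ∨ m 3 ≠ 0) → coeff m u = 0)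
    (G : MvPowerSeries (Fin 4) K) (A b c d : ℕ) :
    coeff (mk4 A b c d) (G * u) =
      ∑ xy ∈ Finset.HasAntidiagonal.antidiagonal A,
        coeff (mk4 xy.1 b c d) G * coeff (mk4 xy.2 0 0 0) u := by
  classical
  rw [coeff_mul]
  rw [← Finset.sum_filter_of_ne
    (p := fun pq : (Fin 4 →₀ ℕ) × (Fin 4 →₀ ℕ) => pq.2 1 = 0 ∧ pq.2 2 = 0 ∧ pq.2 3 = 0)
    (by
      intro pq _ hne
      by_contra hP
      exact hne (by rw [hu pq.2 (by tauto), mul_zero]))]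
  refine Finset.sum_nbij' (fun pq => (pq.1 0, pq.2 0))
    (fun xy => (mk4 xy.1 b c d, mk4 xy.2 0 0 0)) ?_ ?_ ?_ ?_ ?_
  · intro pq hpq
    simp only [Finset.mem_filter, Finset.HasAntidiagonal.mem_antidiagonal] at hpq
    have h0 := DFunLike.congr_fun hpq.1 0
    simp only [Finsupp.add_apply, mk4_apply] at h0
    simpa [Finset.HasAntidiagonal.mem_antidiagonal] using h0
  · intro xy hxy
    simp only [Finset.HasAntidiagonal.mem_antidiagonal] at hxy
    simp only [Finset.mem_filter, Finset.HasAntidiagonal.mem_antidiagonal]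
    refine ⟨?_, by simp, by simp, by simp⟩
    ext x; fin_cases x <;> simp [hxy]
  · intro pq hpq
    simp only [Finset.mem_filter, Finset.HasAntidiagonal.mem_antidiagonal] at hpq
    obtain ⟨hsum, hq1, hq2, hq3⟩ := hpq
    have h1 := DFunLike.congr_fun hsum 1
    have h2 := DFunLike.congr_fun hsum 2
    have h3 := DFunLike.congr_fun hsum 3
    simp only [Finsupp.add_apply, mk4_apply, hq1, hq2, hq3, add_zero] at h1 h2 h3
    have hp : pq.1 = mk4 (pq.1 0) b c d := by
      ext x; fin_cases x <;> simp [h1, h2, h3]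
    have hq : pq.2 = mk4 (pq.2 0) 0 0 0 := by
      ext x; fin_cases x <;> simp [hq1, hq2, hq3]
    exact Prod.ext hp.symm hq.symm
  · intro xy _
    simp
  · intro pq hpq
    simp only [Finset.mem_filter, Finset.HasAntidiagonal.mem_antidiagonal] at hpq
    obtain ⟨hsum, hq1, hq2, hq3⟩ := hpq
    have h1 := DFunLike.congr_fun hsum 1
    have h2 := DFunLike.congr_fun hsum 2
    have h3 := DFunLike.congr_fun hsum 3
    simp only [Finsupp.add_apply, mk4_apply, hq1, hq2, hq3, add_zero] at h1 h2 h3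
    have hp : pq.1 = mk4 (pq.1 0) b c d := by
      ext x; fin_cases x <;> simp [h1, h2, h3]
    have hq : pq.2 = mk4 (pq.2 0) 0 0 0 := by
      ext x; fin_cases x <;> simp [hq1, hq2, hq3]
    rw [← hp, ← hq]

lemma msl_mul_u (u : MvPowerSeries (Fin 4) K)
    (hu : ∀ m : Fin 4 →₀ ℕ, (m 1 ≠ 0 ∨ m 2 ≠ 0 ∨ m 3 ≠ 0) → coeff m u = 0)
    (F : MvPowerSeries (Fin 4) K) (i j k : ℕ) :
    msl (F * u) i j k = msl F i j k * u := by
  ext n; classical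
  by_cases hP : n 1 = 0 ∧ n 2 = 0 ∧ n 3 = 0
  · rw [coeff_msl, if_pos hP]
    have hn : n = mk4 (n 0) 0 0 0 := by
      ext x; fin_cases x <;> simp [hP.1, hP.2.1, hP.2.2]
    nth_rewrite 2 [hn]
    rw [coeff_mk4_mul_u u hu F (n 0) i j k, coeff_mk4_mul_u u hu (msl F i j k) (n 0) 0 0 0]
    refine Finset.sum_congr rfl fun xy _ => ?_
    rw [coeff_msl, if_pos (by simp)]
    simp
  · rw [coeff_msl, if_neg hP, coeff_mul]
    refine (Finset.sum_eq_zero fun pq hpq => ?_).symm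
    rw [Finset.HasAntidiagonal.mem_antidiagonal] at hpq
    by_cases hp : pq.1 1 = 0 ∧ pq.1 2 = 0 ∧ pq.1 3 = 0
    · by_cases hq : pq.2 1 = 0 ∧ pq.2 2 = 0 ∧ pq.2 3 = 0
      · exfalso
        apply hP
        have h1 := DFunLike.congr_fun hpq 1
        have h2 := DFunLike.congr_fun hpq 2
        have h3 := DFunLike.congr_fun hpq 3
        simp only [Finsupp.add_apply] at h1 h2 h3
        omega
      · rw [hu pq.2 (by tauto), mul_zero]
    · rw [coeff_msl, if_neg hp, zero_mul]

def Phi (u : MvPowerSeries (Fin 4) K) (B : ℕ) (F : MvPowerSeries (Fin 4) K) :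
    MvPowerSeries (Fin 4) K :=
  ∑ j ∈ Finset.range (B + 1), ∑ k ∈ Finset.range (B + 1 - j),
    msl F (B - j - k) j k * (X 0) ^ j * u ^ k

lemma Phi_add (u : MvPowerSeries (Fin 4) K) (B : ℕ) (F G : MvPowerSeries (Fin 4) K) :
    Phi u B (F + G) = Phi u B F + Phi u B G := by
  unfold Phi
  rw [← Finset.sum_add_distrib]
  refine Finset.sum_congr rfl fun j _ => ?_
  rw [← Finset.sum_add_distrib]
  refine Finset.sum_congr rfl fun k _ => ?_
  rw [msl_add]; ring

lemma Phi_sub (u : MvPowerSeries (Fin 4) K) (B : ℕ) (F G : MvPowerSeries (Fin 4) K) :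
    Phi u B (F - G) = Phi u B F - Phi u B G := by
  unfold Phi
  rw [← Finset.sum_sub_distrib]
  refine Finset.sum_congr rfl fun j _ => ?_
  rw [← Finset.sum_sub_distrib]
  refine Finset.sum_congr rfl fun k _ => ?_
  rw [msl_sub]; ring

lemma Phi_zero_eq (u G : MvPowerSeries (Fin 4) K) : Phi u 0 G = msl G 0 0 0 := by
  unfold Phi
  simp

lemma Phi_succ_X2 (u : MvPowerSeries (Fin 4) K) (B : ℕ) (F : MvPowerSeries (Fin 4) K) :
    Phi u (B + 1) (F * X 2) = Phi u B F * X 0 := by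
  unfold Phi
  rw [Finset.sum_range_succ']
  have h0 : ∑ k ∈ Finset.range (B + 1 + 1 - 0),
      msl (F * X 2) (B + 1 - 0 - k) 0 k * (X 0 : MvPowerSeries (Fin 4) K) ^ 0 * u ^ k = 0 := by
    refine Finset.sum_eq_zero fun k _ => ?_
    rw [msl_mul_X2_zero]; ring
  rw [h0, add_zero, Finset.sum_mul]
  refine Finset.sum_congr rfl fun j hj => ?_
  rw [Finset.sum_mul]
  have hr : B + 1 + 1 - (j + 1) = B + 1 - j := by omega
  rw [hr]
  refine Finset.sum_congr rfl fun k hk => ?_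
  have h1 : B + 1 - (j + 1) - k = B - j - k := by omega
  rw [h1, msl_mul_X2_succ]
  ring

lemma Phi_succ_X0X1 (u : MvPowerSeries (Fin 4) K) (B : ℕ) (F : MvPowerSeries (Fin 4) K) :
    Phi u (B + 1) (F * (X 0 * X 1)) = Phi u B F * X 0 := by
  have hG : ∀ i j k : ℕ, msl (F * (X 0 * X 1)) (i + 1) j k = X 0 * msl F i j k := by
    intro i j k
    rw [← mul_assoc, msl_mul_X1_succ, msl_mul_X0]
  have hG0 : ∀ j k : ℕ, msl (F * (X 0 * X 1)) 0 j k = 0 := by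
    intro j k
    rw [← mul_assoc, msl_mul_X1_zero]
  unfold Phi
  rw [Finset.sum_range_succ]
  have hlast : ∑ k ∈ Finset.range (B + 1 + 1 - (B + 1)),
      msl (F * (X 0 * X 1)) (B + 1 - (B + 1) - k) (B + 1) k *
        (X 0 : MvPowerSeries (Fin 4) K) ^ (B + 1) * u ^ k = 0 := by
    refine Finset.sum_eq_zero fun k hk => ?_
    have : B + 1 - (B + 1) - k = 0 := by omega
    rw [this, hG0]; ring
  rw [hlast, add_zero, Finset.sum_mul]
  refine Finset.sum_congr rfl fun j hj => ?_
  rw [Finset.mem_range] at hj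
  have hr : B + 1 + 1 - j = (B + 1 - j) + 1 := by omega
  rw [hr, Finset.sum_range_succ]
  have hlast2 : msl (F * (X 0 * X 1)) (B + 1 - j - (B + 1 - j)) j (B + 1 - j) *
      (X 0 : MvPowerSeries (Fin 4) K) ^ j * u ^ (B + 1 - j) = 0 := by
    have : B + 1 - j - (B + 1 - j) = 0 := by omega
    rw [this, hG0]; ring
  rw [hlast2, add_zero, Finset.sum_mul]
  refine Finset.sum_congr rfl fun k hk => ?_
  rw [Finset.mem_range] at hk
  have h1 : B + 1 - j - k = (B - j - k) + 1 := by omega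
  rw [h1, hG]
  ring

lemma Phi_succ_X3 (u : MvPowerSeries (Fin 4) K) (B : ℕ) (F : MvPowerSeries (Fin 4) K) :
    Phi u (B + 1) (F * X 3) = Phi u B F * u := by
  unfold Phi
  rw [Finset.sum_range_succ]
  have hlast : ∑ k ∈ Finset.range (B + 1 + 1 - (B + 1)),
      msl (F * X 3) (B + 1 - (B + 1) - k) (B + 1) k *
        (X 0 : MvPowerSeries (Fin 4) K) ^ (B + 1) * u ^ k = 0 := by
    have : B + 1 + 1 - (B + 1) = 1 := by omega
    rw [this]
    simp [msl_mul_X3_zero]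
  rw [hlast, add_zero, Finset.sum_mul]
  refine Finset.sum_congr rfl fun j hj => ?_
  rw [Finset.mem_range] at hj
  have hr : B + 1 + 1 - j = (B + 1 - j) + 1 := by omega
  rw [hr, Finset.sum_range_succ']
  have h00 : msl (F * X 3) (B + 1 - j - 0) j 0 *
      (X 0 : MvPowerSeries (Fin 4) K) ^ j * u ^ 0 = 0 := by
    rw [msl_mul_X3_zero]; ring
  rw [h00, add_zero, Finset.sum_mul]
  refine Finset.sum_congr rfl fun k hk => ?_
  rw [Finset.mem_range] at hk
  have h1 : B + 1 - j - (k + 1) = B - j - k := by omega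
  rw [h1, msl_mul_X3_succ]
  ring

lemma Phi_succ_uX1 (u : MvPowerSeries (Fin 4) K)
    (hu : ∀ m : Fin 4 →₀ ℕ, (m 1 ≠ 0 ∨ m 2 ≠ 0 ∨ m 3 ≠ 0) → coeff m u = 0)
    (B : ℕ) (F : MvPowerSeries (Fin 4) K) :
    Phi u (B + 1) (F * (u * X 1)) = Phi u B F * u := by
  have hG : ∀ i j k : ℕ, msl (F * (u * X 1)) (i + 1) j k = msl F i j k * u := by
    intro i j k
    rw [← mul_assoc, msl_mul_X1_succ, msl_mul_u u hu]
  have hG0 : ∀ j k : ℕ, msl (F * (u * X 1)) 0 j k = 0 := by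
    intro j k
    rw [← mul_assoc, msl_mul_X1_zero]
  unfold Phi
  rw [Finset.sum_range_succ]
  have hlast : ∑ k ∈ Finset.range (B + 1 + 1 - (B + 1)),
      msl (F * (u * X 1)) (B + 1 - (B + 1) - k) (B + 1) k *
        (X 0 : MvPowerSeries (Fin 4) K) ^ (B + 1) * u ^ k = 0 := by
    refine Finset.sum_eq_zero fun k hk => ?_
    have : B + 1 - (B + 1) - k = 0 := by omega
    rw [this, hG0]; ring
  rw [hlast, add_zero, Finset.sum_mul]
  refine Finset.sum_congr rfl fun j hj => ?_
  rw [Finset.mem_range] at hj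
  have hr : B + 1 + 1 - j = (B + 1 - j) + 1 := by omega
  rw [hr, Finset.sum_range_succ]
  have hlast2 : msl (F * (u * X 1)) (B + 1 - j - (B + 1 - j)) j (B + 1 - j) *
      (X 0 : MvPowerSeries (Fin 4) K) ^ j * u ^ (B + 1 - j) = 0 := by
    have : B + 1 - j - (B + 1 - j) = 0 := by omega
    rw [this, hG0]; ring
  rw [hlast2, add_zero, Finset.sum_mul]
  refine Finset.sum_congr rfl fun k hk => ?_
  rw [Finset.mem_range] at hk
  have h1 : B + 1 - j - k = (B - j - k) + 1 := by omega
  rw [h1, hG]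
  ring

lemma Phi_g1 (u : MvPowerSeries (Fin 4) K) (B : ℕ) (F : MvPowerSeries (Fin 4) K) :
    Phi u B (F * (X 2 - X 0 * X 1)) = 0 := by
  rw [mul_sub, Phi_sub]
  cases B with
  | zero =>
      rw [Phi_zero_eq, Phi_zero_eq, msl_mul_X2_zero]
      rw [show (0:ℕ) = 0 + 0 from rfl]  -- dummy
      rw [← mul_assoc, msl_mul_X1_zero]
      simp
  | succ B => rw [Phi_succ_X2, Phi_succ_X0X1, sub_self]

lemma Phi_g2 (u : MvPowerSeries (Fin 4) K)
    (hu : ∀ m : Fin 4 →₀ ℕ, (m 1 ≠ 0 ∨ m 2 ≠ 0 ∨ m 3 ≠ 0) → coeff m u = 0)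
    (B : ℕ) (F : MvPowerSeries (Fin 4) K) :
    Phi u B (F * (X 3 - u * X 1)) = 0 := by
  rw [mul_sub, Phi_sub]
  cases B with
  | zero =>
      rw [Phi_zero_eq, Phi_zero_eq, msl_mul_X3_zero]
      rw [← mul_assoc, msl_mul_X1_zero]
      simp
  | succ B => rw [Phi_succ_X3, Phi_succ_uX1 u hu, sub_self]

lemma msl_const (f : MvPowerSeries (Fin 4) K)
    (hf : ∀ m : Fin 4 →₀ ℕ, m 0 ≠ 0 → coeff m f = 0) (i j k : ℕ) :
    msl f i j k = MvPowerSeries.C (coeff (mk4 0 i j k) f) := by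
  ext n; classical
  rw [coeff_msl, coeff_C]
  by_cases hP : n 1 = 0 ∧ n 2 = 0 ∧ n 3 = 0
  · rw [if_pos hP]
    by_cases h0 : n 0 = 0
    · have hn : n = 0 := by
        ext x; fin_cases x <;> simp [h0, hP.1, hP.2.1, hP.2.2]
      rw [if_pos hn, h0]
    · rw [if_neg (fun hn => h0 (by rw [hn]; rfl)), hf _ (by simpa using h0)]
  · rw [if_neg hP, if_neg]
    intro hn
    apply hP
    rw [hn]
    exact ⟨rfl, rfl, rfl⟩

open MvPolynomial in
lemma mon2_eq (j k : ℕ) (c : K) :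
    (MvPolynomial.monomial (Finsupp.single (0 : Fin 2) j + Finsupp.single 1 k) c :
      MvPolynomial (Fin 2) K) =
      MvPolynomial.C c * MvPolynomial.X 0 ^ j * MvPolynomial.X 1 ^ k := by
  rw [MvPolynomial.X_pow_eq_monomial, MvPolynomial.X_pow_eq_monomial, mul_assoc,
    MvPolynomial.monomial_mul, MvPolynomial.C_mul_monomial]
  simp

open MvPolynomial in
/-- the polynomial recording the coefficients of `f` in total degree `B` -/
def QB (f : MvPowerSeries (Fin 4) K) (B : ℕ) : MvPolynomial (Fin 2) K :=
  ∑ j ∈ Finset.range (B + 1), ∑ k ∈ Finset.range (B + 1 - j),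
    MvPolynomial.monomial (Finsupp.single (0 : Fin 2) j + Finsupp.single 1 k)
      (coeff (mk4 0 (B - j - k) j k) f)

open MvPolynomial in
lemma aeval_QB (u f : MvPowerSeries (Fin 4) K)
    (hf : ∀ m : Fin 4 →₀ ℕ, m 0 ≠ 0 → coeff m f = 0) (B : ℕ) :
    MvPolynomial.aeval ![(X 0 : MvPowerSeries (Fin 4) K), u] (QB f B) = Phi u B f := by
  unfold QB Phi
  rw [map_sum]
  refine Finset.sum_congr rfl fun j _ => ?_
  rw [map_sum]
  refine Finset.sum_congr rfl fun k _ => ?_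
  rw [mon2_eq, map_mul, map_mul, map_pow, map_pow, aeval_X, aeval_X, aeval_C]
  rw [msl_const f hf]
  simp [MvPowerSeries.algebraMap_apply, Matrix.cons_val_zero, Matrix.cons_val_one,
    Matrix.head_cons]

lemma coeff_QB (f : MvPowerSeries (Fin 4) K) (B j0 k0 : ℕ) (h : j0 + k0 ≤ B) :
    MvPolynomial.coeff (Finsupp.single (0 : Fin 2) j0 + Finsupp.single 1 k0) (QB f B) =
      coeff (mk4 0 (B - j0 - k0) j0 k0) f := by
  classical
  unfold QB
  rw [MvPolynomial.coeff_sum]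
  have key : ∀ j ∈ Finset.range (B + 1),
      (MvPolynomial.coeff (Finsupp.single (0 : Fin 2) j0 + Finsupp.single 1 k0)
        (∑ k ∈ Finset.range (B + 1 - j),
          MvPolynomial.monomial (Finsupp.single (0 : Fin 2) j + Finsupp.single 1 k)
            (coeff (mk4 0 (B - j - k) j k) f))) =
      if j = j0 then coeff (mk4 0 (B - j - k0) j k0) f else 0 := by
    intro j _
    rw [MvPolynomial.coeff_sum]
    have key2 : ∀ k ∈ Finset.range (B + 1 - j),
        MvPolynomial.coeff (Finsupp.single (0 : Fin 2) j0 + Finsupp.single 1 k0)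
          (MvPolynomial.monomial (Finsupp.single (0 : Fin 2) j + Finsupp.single 1 k)
            (coeff (mk4 0 (B - j - k) j k) f)) =
        if j = j0 ∧ k = k0 then coeff (mk4 0 (B - j - k) j k) f else 0 := by
      intro k _
      rw [MvPolynomial.coeff_monomial]
      congr 1
      · rw [eq_iff_iff]
        constructor
        · intro hsingle
          have e0 := DFunLike.congr_fun hsingle (0 : Fin 2)
          have e1 := DFunLike.congr_fun hsingle (1 : Fin 2)
          simp [Finsupp.add_apply, Finsupp.single_apply] at e0 e1
          exact ⟨e0, e1⟩
        · rintro ⟨rfl, rfl⟩; rfl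
    rw [Finset.sum_congr rfl key2]
    by_cases hj : j = j0
    · subst hj
      rw [if_pos rfl]
      have hsimp : ∀ k ∈ Finset.range (B + 1 - j),
          (if j = j ∧ k = k0 then coeff (mk4 0 (B - j - k) j k) f else 0) =
          (if k = k0 then coeff (mk4 0 (B - j - k) j k) f else 0) := by
        intro k _; simp
      rw [Finset.sum_congr rfl hsimp, Finset.sum_ite_eq' (Finset.range (B + 1 - j)) k0
        (fun k => coeff (mk4 0 (B - j - k) j k) f), if_pos]
      rw [Finset.mem_range]; omega
    · simp [hj]
  rw [Finset.sum_congr rfl key]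
  rw [Finset.sum_ite_eq' (Finset.range (B + 1)) j0
    (fun j => coeff (mk4 0 (B - j - k0) j k0) f), if_pos]
  rw [Finset.mem_range]; omega

end

/-- in `R = F_p[[a,b,c,d]]` (variables `X 0 = a, X 1 = b, X 2 = c, X 3 = d`),
let `u` be a power series in the variable `a` only, with zero constant term, with `a, u`
algebraically independent over `F_p`, and let `I = (c - ab, d - ub)`.  Then the intersection
of `I` with the subring `S = F_p[[b,c,d]]` of series not involving `a` is zero, i.e. the
composite `S → R → R/I` is injective. -/
theorem stmt_8 (p : ℕ) [Fact p.Prime]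
    (u : MvPowerSeries (Fin 4) (ZMod p))
    (hu_a_only : ∀ m : Fin 4 →₀ ℕ, (m 1 ≠ 0 ∨ m 2 ≠ 0 ∨ m 3 ≠ 0) →
      MvPowerSeries.coeff m u = 0)
    (hu0 : MvPowerSeries.constantCoeff u = 0)
    (hind : AlgebraicIndependent (ZMod p)
      ![(MvPowerSeries.X 0 : MvPowerSeries (Fin 4) (ZMod p)), u]) :
    ∀ f ∈ Ideal.span ({MvPowerSeries.X 2 - MvPowerSeries.X 0 * MvPowerSeries.X 1,
        MvPowerSeries.X 3 - u * MvPowerSeries.X 1} : Set (MvPowerSeries (Fin 4) (ZMod p))),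
      (∀ m : Fin 4 →₀ ℕ, m 0 ≠ 0 → MvPowerSeries.coeff m f = 0) → f = 0 := by
  intro f hf hfa
  obtain ⟨r, s, hrs⟩ := Ideal.mem_span_pair.mp hf
  have hPhi : ∀ B, Phi u B f = 0 := by
    intro B
    rw [← hrs, Phi_add, Phi_g1, Phi_g2 u hu_a_only, add_zero]
  have hQ : ∀ B : ℕ, QB f B = 0 := by
    intro B
    have h := aeval_QB u f hfa B
    rw [hPhi B] at h
    exact hind (a₁ := QB f B) (a₂ := 0) (by rw [map_zero]; exact h)
  apply MvPowerSeries.ext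
  intro m
  by_cases h0 : m 0 = 0
  · have hc := coeff_QB f (m 1 + m 2 + m 3) (m 2) (m 3) (by omega)
    rw [hQ (m 1 + m 2 + m 3), MvPolynomial.coeff_zero] at hc
    have hm : mk4 0 ((m 1 + m 2 + m 3) - m 2 - m 3) (m 2) (m 3) = m := by
      have he : (m 1 + m 2 + m 3) - m 2 - m 3 = m 1 := by omega
      rw [he]; ext x; fin_cases x <;> simp [h0]
    rw [hm] at hc
    rw [map_zero]
    exact hc.symm
  · rw [map_zero]; exact hfa m h0
end

section
/- Let H be a pro-p group of finite rank with no nontrivial finite normal subgroups and dim H = 1, where p is an odd prime. Then H is isomorphic to the additive group ℤ_p of p-adic integers. -/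
section

variable (p : ℕ) (G : Type*) [Group G] [TopologicalSpace G] [IsTopologicalGroup G]

/-- The lower `p`-series of a topological group: `P 0 = G` and
`P (i+1) = closure (P i ^ p · [P i, G])`. -/
def lowerPSeries : ℕ → Subgroup G
  | 0 => ⊤
  | i + 1 => (Subgroup.closure
      ({x | ∃ h ∈ lowerPSeries i, x = h ^ p} ∪
       {x | ∃ h ∈ lowerPSeries i, ∃ g : G, x = h * g * h⁻¹ * g⁻¹})).topologicalClosure

/-- Powerful topological group. -/
def IsPowerful : Prop :=
  ∀ x y : G, x * y * x⁻¹ * y⁻¹ ∈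
    (Subgroup.closure {z : G | ∃ g : G, z = g ^ (if p = 2 then 4 else p)}).topologicalClosure

/-- Topologically finitely generated. -/
def IsTopFG : Prop :=
  ∃ S : Finset G, (Subgroup.closure (S : Set G)).topologicalClosure = ⊤

/-- Uniform pro-`p` group. -/
def IsUniform : Prop :=
  IsPowerful p G ∧ IsTopFG G ∧
    ∀ i : ℕ, (lowerPSeries p G (i + 1)).relIndex (lowerPSeries p G i) =
      (lowerPSeries p G 1).relIndex ⊤

/-- Pro-`p` group. -/
def IsProPGroup : Prop :=
  ∀ (N : Subgroup G) [N.Normal], IsOpen (N : Set G) → IsPGroup p (G ⧸ N)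

/-- Finite rank. -/
def HasFiniteRank : Prop :=
  ∃ r : ℕ, ∀ H : Subgroup G, IsClosed (H : Set G) →
    ∃ S : Finset G, S.card ≤ r ∧ ↑S ⊆ (H : Set G) ∧
      (Subgroup.closure (S : Set G)).topologicalClosure = H


open Finset in
lemma aux_padic_pow_p_eq_one {p : ℕ} [hp : Fact p.Prime] (hodd : p ≠ 2)
    (u : ℤ_[p]) (hu : u ^ p = 1) : u = 1 := by
  have hp1 : 1 < p := hp.out.one_lt
  set y : ℤ_[p] := u - 1 with hy
  -- step 1 : ‖y‖ ≤ p⁻¹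
  have htz : PadicInt.toZMod u = 1 := by
    have h1 : (PadicInt.toZMod u) ^ p = 1 := by
      rw [← map_pow, hu, map_one]
    have h2 := ZMod.pow_card (PadicInt.toZMod u)
    rw [h1] at h2; exact h2.symm
  have hyd : (p : ℤ_[p]) ∣ y := by
    rw [← PadicInt.norm_lt_one_iff_dvd, ← PadicInt.mem_nonunits]
    · have : y ∈ IsLocalRing.maximalIdeal ℤ_[p] := by
        rw [← PadicInt.ker_toZMod, RingHom.mem_ker, map_sub, htz, map_one, sub_self]
      exact this
  obtain ⟨z, hz⟩ := hyd
  have hyle : ‖y‖ ≤ (p : ℝ)⁻¹ := by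
    rw [hz, norm_mul, PadicInt.norm_p]
    calc (p:ℝ)⁻¹ * ‖z‖ ≤ (p:ℝ)⁻¹ * 1 := by
          exact mul_le_mul_of_nonneg_left (PadicInt.norm_le_one z) (by positivity)
      _ = (p:ℝ)⁻¹ := mul_one _
  set s : ℤ_[p] := ∑ i ∈ range p, u ^ i with hs
  have hkey : s * y = 0 := by rw [hy, geom_sum_mul, hu, sub_self]
  -- remainders
  set r : ℕ → ℤ_[p] := fun i => u ^ i - 1 - (i : ℤ_[p]) * y with hr
  have hrb : ∀ i, ‖r i‖ ≤ ‖y‖ * ‖y‖ := by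
    intro i
    induction i with
    | zero => simp [hr]; positivity
    | succ i ih =>
      have hre : r (i + 1) = u * r i + (i : ℤ_[p]) * y ^ 2 := by
        simp only [hr, hy]; push_cast; ring
      rw [hre]
      refine le_trans (PadicInt.nonarchimedean _ _) (max_le ?_ ?_)
      · rw [norm_mul]
        calc ‖u‖ * ‖r i‖ ≤ 1 * (‖y‖ * ‖y‖) :=
              mul_le_mul (PadicInt.norm_le_one u) ih (norm_nonneg _) zero_le_one
          _ = ‖y‖ * ‖y‖ := one_mul _
      · rw [norm_mul, sq, norm_mul]
        calc ‖(i:ℤ_[p])‖ * (‖y‖ * ‖y‖) ≤ 1 * (‖y‖ * ‖y‖) :=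
              mul_le_mul_of_nonneg_right (PadicInt.norm_le_one _) (by positivity)
          _ = ‖y‖ * ‖y‖ := one_mul _
  -- Gauss sum divisible by p
  obtain ⟨q, hq⟩ : ∃ q : ℕ, (∑ i ∈ range p, i) = p * q := by
    obtain ⟨q, hq⟩ : ∃ q, p - 1 = 2 * q := by
      have : ¬ 2 ∣ p := by
        intro h2
        exact hodd ((Nat.prime_dvd_prime_iff_eq Nat.prime_two hp.out).mp h2).symm
      refine ⟨(p-1)/2, (Nat.mul_div_cancel' ?_).symm⟩
      omega
    refine ⟨q, ?_⟩
    have h2 := Finset.sum_range_id_mul_two p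
    have : (∑ i ∈ range p, i) * 2 = (p * q) * 2 := by
      rw [h2, hq]; ring
    omega
  have hsub : s - (p : ℤ_[p]) = (↑(p * q) : ℤ_[p]) * y + ∑ i ∈ range p, r i := by
    have h1 : s - (p : ℤ_[p]) = ∑ i ∈ range p, (u ^ i - 1) := by
      rw [Finset.sum_sub_distrib, Finset.sum_const, card_range, nsmul_eq_mul, mul_one]
    rw [h1]
    have h2 : ∀ i ∈ range p, u ^ i - 1 = (i:ℤ_[p]) * y + r i := by
      intro i _; simp only [hr]; ring
    rw [Finset.sum_congr rfl h2, Finset.sum_add_distrib, ← Finset.sum_mul]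
    congr 2
    rw [← Nat.cast_sum, hq]
  -- norm bound on s - p
  have hpinv0 : (0:ℝ) < (p:ℝ)⁻¹ := by
    have : (0:ℝ) < p := by exact_mod_cast hp.out.pos
    positivity
  have hsp : ‖s - (p:ℤ_[p])‖ ≤ (p:ℝ)⁻¹ * (p:ℝ)⁻¹ := by
    rw [hsub]
    refine le_trans (PadicInt.nonarchimedean _ _) (max_le ?_ ?_)
    · rw [Nat.cast_mul, norm_mul, norm_mul, PadicInt.norm_p]
      have h1 : ‖(q:ℤ_[p])‖ ≤ 1 := PadicInt.norm_le_one _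
      have h2 : (0:ℝ) ≤ ‖(q:ℤ_[p])‖ := norm_nonneg _
      have h3 : (0:ℝ) ≤ ‖y‖ := norm_nonneg _
      have h4 := mul_le_mul (mul_le_mul_of_nonneg_left h1 hpinv0.le) hyle h3 (by positivity : (0:ℝ) ≤ (p:ℝ)⁻¹ * 1)
      linarith
    · refine IsUltrametricDist.norm_sum_le_of_forall_le_of_nonneg (by positivity) ?_
      intro i _
      have h3 : (0:ℝ) ≤ ‖y‖ := norm_nonneg _
      nlinarith [hrb i]
  have hsne : s ≠ 0 := by
    intro h0
    rw [h0, zero_sub, norm_neg, PadicInt.norm_p] at hsp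
    have hpR : (1:ℝ) < p := by exact_mod_cast hp1
    have hinv : (p:ℝ)⁻¹ < 1 := by
      rw [inv_lt_one_iff₀]; right; exact hpR
    nlinarith [mul_lt_mul_of_pos_left hinv hpinv0]
  have : y = 0 := by
    rcases mul_eq_zero.mp hkey with h | h
    · exact absurd h hsne
    · exact h
  rw [hy] at this
  exact sub_eq_zero.mp this

lemma aux_padic_addHom_eq_mul {p : ℕ} [hp : Fact p.Prime] (F : ℤ_[p] →+ ℤ_[p]) :
    ∀ a, F a = a * F 1 := by
  have hbound : ∀ (n : ℕ) (x : ℤ_[p]), ‖x‖ ≤ (p:ℝ) ^ (-n : ℤ) → ‖F x‖ ≤ (p:ℝ) ^ (-n : ℤ) := by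
    intro n x hx
    rw [PadicInt.norm_le_pow_iff_mem_span_pow, Ideal.mem_span_singleton] at hx ⊢
    obtain ⟨c, hc⟩ := hx
    refine ⟨F c, ?_⟩
    have : x = ((p ^ n : ℕ) : ℤ_[p]) * c := by rw [hc]; push_cast; ring
    rw [this, ← nsmul_eq_mul, map_nsmul, nsmul_eq_mul]
    push_cast; ring
  have hcont : Continuous F := by
    rw [Metric.continuous_iff]
    intro b ε hε
    have hp1 : (1:ℝ) < p := by exact_mod_cast hp.out.one_lt
    obtain ⟨n, hn⟩ := exists_pow_lt_of_lt_one hε (by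
      rw [inv_lt_one_iff₀]; right; exact hp1 : (p:ℝ)⁻¹ < 1)
    have hpn : ((p:ℝ)⁻¹) ^ n = (p:ℝ) ^ (-n : ℤ) := by
      rw [inv_pow, ← zpow_natCast, ← zpow_neg]
    refine ⟨(p:ℝ) ^ (-n : ℤ), by positivity, ?_⟩
    intro a ha
    have h1 : ‖a - b‖ ≤ (p:ℝ) ^ (-n:ℤ) := by
      rw [dist_eq_norm] at ha; exact le_of_lt ha
    have h2 := hbound n _ h1
    rw [map_sub] at h2
    rw [dist_eq_norm]
    calc ‖F a - F b‖ ≤ (p:ℝ) ^ (-n:ℤ) := h2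
      _ = ((p:ℝ)⁻¹) ^ n := hpn.symm
      _ < ε := hn
  have hint : ∀ n : ℤ, F (n : ℤ_[p]) = (n : ℤ_[p]) * F 1 := by
    intro n
    have h1 : ((n : ℤ_[p])) = n • (1 : ℤ_[p]) := by rw [zsmul_eq_mul, mul_one]
    rw [h1, map_zsmul, zsmul_eq_mul, zsmul_eq_mul, mul_one]
  have := PadicInt.denseRange_intCast.equalizer hcont
    (by continuity : Continuous fun a : ℤ_[p] => a * F 1)
    (funext fun n => by simpa using hint n)
  intro a
  exact congrFun this a

open scoped commutatorElement in
lemma aux_finite_commutatorSet (G : Type*) [Group G] [Finite (G ⧸ Subgroup.center G)] :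
    Finite (commutatorSet G) := by
  set Z := Subgroup.center G
  have key : ∀ g₁ g₂ : G, ⁅g₁, g₂⁆ =
      ⁅(QuotientGroup.mk g₁ : G ⧸ Z).out, (QuotientGroup.mk g₂ : G ⧸ Z).out⁆ := by
    intro g₁ g₂
    obtain ⟨z₁, hz₁, e₁⟩ : ∃ z₁ ∈ Z, (QuotientGroup.mk g₁ : G ⧸ Z).out = g₁ * z₁ := by
      have h := QuotientGroup.mk_out_eq_mul Z g₁
      obtain ⟨z, hz⟩ := h
      exact ⟨z, z.2, hz⟩
    obtain ⟨z₂, hz₂, e₂⟩ : ∃ z₂ ∈ Z, (QuotientGroup.mk g₂ : G ⧸ Z).out = g₂ * z₂ := by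
      have h := QuotientGroup.mk_out_eq_mul Z g₂
      obtain ⟨z, hz⟩ := h
      exact ⟨z, z.2, hz⟩
    rw [e₁, e₂, commutatorElement_def, commutatorElement_def]
    have c₁ : ∀ w : G, z₁ * w = w * z₁ := fun w => (Subgroup.mem_center_iff.mp hz₁ w).symm
    have c₂ : ∀ w : G, z₂ * w = w * z₂ := fun w => (Subgroup.mem_center_iff.mp hz₂ w).symm
    rw [mul_inv_rev, mul_inv_rev]
    symm
    calc g₁ * z₁ * (g₂ * z₂) * (z₁⁻¹ * g₁⁻¹) * (z₂⁻¹ * g₂⁻¹)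
        = g₁ * (z₁ * g₂) * (z₂ * z₁⁻¹) * g₁⁻¹ * z₂⁻¹ * g₂⁻¹ := by group
      _ = g₁ * (g₂ * z₁) * (z₂ * z₁⁻¹) * g₁⁻¹ * z₂⁻¹ * g₂⁻¹ := by rw [c₁ g₂]
      _ = g₁ * g₂ * (z₁ * z₂) * z₁⁻¹ * g₁⁻¹ * z₂⁻¹ * g₂⁻¹ := by group
      _ = g₁ * g₂ * (z₂ * z₁) * z₁⁻¹ * g₁⁻¹ * z₂⁻¹ * g₂⁻¹ := by rw [c₁ z₂]
      _ = g₁ * g₂ * (z₂ * g₁⁻¹) * z₂⁻¹ * g₂⁻¹ := by group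
      _ = g₁ * g₂ * (g₁⁻¹ * z₂) * z₂⁻¹ * g₂⁻¹ := by rw [c₂ g₁⁻¹]
      _ = g₁ * g₂ * g₁⁻¹ * g₂⁻¹ := by group
  have : commutatorSet G ⊆ Set.range (fun q : (G ⧸ Z) × (G ⧸ Z) => ⁅q.1.out, q.2.out⁆) := by
    rintro x ⟨g₁, g₂, rfl⟩
    exact ⟨(QuotientGroup.mk g₁, QuotientGroup.mk g₂), (key g₁ g₂).symm⟩
  exact Set.Finite.subset (Set.finite_range _) this

open scoped commutatorElement in
theorem stmt_10_aux {p : ℕ} [Fact p.Prime] (hodd : p ≠ 2)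
    (H : Type*) [Group H] [TopologicalSpace H] [IsTopologicalGroup H]
    [CompactSpace H] [T2Space H] [TotallyDisconnectedSpace H]
    (hpro : ∀ (N : Subgroup H) [N.Normal], IsOpen (N : Set H) → IsPGroup p (H ⧸ N))
    (hnofin : ∀ K : Subgroup H, K.Normal → (K : Set H).Finite → K = ⊥)
    (U : Subgroup H) (hUo : IsOpen (U : Set H))
    (f : U ≃* Multiplicative ℤ_[p]) (hfc : Continuous f) (hfc' : Continuous f.symm) :
    ∃ e : H ≃* Multiplicative ℤ_[p], Continuous e ∧ Continuous e.symm := by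
  -- basic facts about U
  have hUcomm : ∀ x y : ↥U, x * y = y * x := by
    intro x y
    apply f.injective
    rw [map_mul, map_mul, mul_comm]
  have hUtf : ∀ (x : ↥U) (n : ℕ), n ≠ 0 → x ^ n = 1 → x = 1 := by
    intro x n hn hxn
    apply f.injective
    have h1 : (f x) ^ n = 1 := by rw [← map_pow, hxn, map_one]
    have h2 : n • (Multiplicative.toAdd (f x)) = 0 := h1
    rw [nsmul_eq_mul] at h2
    have h3 : (Multiplicative.toAdd (f x)) = 0 := by
      rcases mul_eq_zero.mp h2 with h | h
      · exact absurd h (by exact_mod_cast hn)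
      · exact h
    rw [map_one]
    exact h3
  haveI hUfin : Finite (H ⧸ U) := Subgroup.quotient_finite_of_isOpen U hUo
  haveI : U.FiniteIndex := Subgroup.finiteIndex_of_finite_quotient (H := U)
  -- the normal core N
  set N : Subgroup H := U.normalCore with hN
  have hNU : N ≤ U := Subgroup.normalCore_le U
  haveI hNnormal : N.Normal := Subgroup.normalCore_normal U
  haveI : N.FiniteIndex := Subgroup.finiteIndex_normalCore U
  have hNclosed : IsClosed (N : Set H) := Subgroup.normalCore_isClosed U (U.isClosed_of_isOpen hUo)
  have hNopen : IsOpen (N : Set H) := Subgroup.isOpen_of_isClosed_of_finiteIndex N hNclosed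
  -- the centralizer C
  set C : Subgroup H := Subgroup.centralizer (N : Set H) with hC
  have hUC : U ≤ C := by
    intro u hu
    rw [Subgroup.mem_centralizer_iff]
    intro n hn
    have := hUcomm ⟨n, hNU hn⟩ ⟨u, hu⟩
    exact congrArg Subtype.val this
  have hNC : N ≤ C := le_trans hNU hUC
  have hCopen : IsOpen (C : Set H) :=
    Subgroup.isOpen_of_openSubgroup C (U := ⟨U, hUo⟩) hUC
  have hCclosed : IsClosed (C : Set H) := C.isClosed_of_isOpen hCopen
  haveI hCnormal : C.Normal := by
    constructor
    intro g hg h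
    rw [Subgroup.mem_centralizer_iff]
    intro n hn
    have hn' : h⁻¹ * n * h ∈ N := by
      have := hNnormal.conj_mem n hn h⁻¹
      simpa using this
    have := hg (h⁻¹ * n * h) hn'
    have h2 := congrArg (fun z => h * z * h⁻¹) this
    calc n * (h * g * h⁻¹) = h * (h⁻¹ * n * h * g) * h⁻¹ := by group
      _ = h * (g * (h⁻¹ * n * h)) * h⁻¹ := by rw [this]
      _ = h * g * h⁻¹ * n := by group
  haveI : Finite (H ⧸ C) := Subgroup.quotient_finite_of_isOpen C hCopen
  haveI : C.FiniteIndex := Subgroup.finiteIndex_of_finite_quotient (H := C)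
  -- C is commutative (Schur)
  haveI hNCfi : (N.subgroupOf C).FiniteIndex := by
    constructor
    have hdvd : N.relIndex C ∣ N.index := Subgroup.relIndex_dvd_index_of_normal N C
    intro h0
    rw [Subgroup.relIndex] at hdvd
    rw [h0] at hdvd
    exact Subgroup.FiniteIndex.index_ne_zero (zero_dvd_iff.mp hdvd)
  have hCcomm : ∀ x y : ↥C, x * y = y * x := by
    have hNZ : N.subgroupOf C ≤ Subgroup.center ↥C := by
      intro x hx
      rw [Subgroup.mem_center_iff]
      intro c
      exact Subtype.ext (c.2 (x : H) hx).symm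
    haveI : (Subgroup.center ↥C).FiniteIndex := by
      constructor
      intro h0
      have hdvd := Subgroup.index_dvd_of_le hNZ
      rw [h0] at hdvd
      exact hNCfi.index_ne_zero (zero_dvd_iff.mp hdvd)
    haveI : Finite (↥C ⧸ Subgroup.center ↥C) := Subgroup.finite_quotient_of_finiteIndex
    haveI : Finite (commutatorSet ↥C) := aux_finite_commutatorSet ↥C
    haveI hcf : Finite (commutator ↥C) := inferInstance
    set D : Subgroup H := (commutator ↥C).map C.subtype with hD
    have hDset : (D : Set H).Finite := Set.Finite.image _ (Set.toFinite _)
    have hDeq : D = ⁅C, C⁆ := by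
      rw [hD, commutator_def, Subgroup.map_commutator, ← MonoidHom.range_eq_map,
        Subgroup.range_subtype]
    have hDnormal : D.Normal := by
      rw [hDeq]
      infer_instance
    have hDbot : D = ⊥ := hnofin D hDnormal hDset
    intro x y
    have hmem : ⁅x, y⁆ ∈ commutator ↥C :=
      Subgroup.commutator_mem_commutator (Subgroup.mem_top x) (Subgroup.mem_top y)
    have : C.subtype ⁅x, y⁆ ∈ D := Subgroup.mem_map_of_mem _ hmem
    rw [hDbot, Subgroup.mem_bot] at this
    have h1 : ⁅x, y⁆ = 1 := Subtype.ext this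
    rw [commutatorElement_def] at h1
    have := congrArg (fun z => z * y * x) h1
    simp only [one_mul] at this
    calc x * y = x * y * (x⁻¹ * y⁻¹ * y * x) := by group
      _ = (x * y * x⁻¹ * y⁻¹) * y * x := by group
      _ = y * x := by rw [h1]; group
  -- commuting in H
  have hCcommH : ∀ x y : H, x ∈ C → y ∈ C → x * y = y * x := by
    intro x y hx hy
    exact congrArg Subtype.val (hCcomm ⟨x, hx⟩ ⟨y, hy⟩)
  -- the power map into N
  haveI : (N.subgroupOf C).Normal := hNnormal.subgroupOf C
  set m : ℕ := (N.subgroupOf C).index with hm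
  have hm0 : m ≠ 0 := hNCfi.index_ne_zero
  have hpowN : ∀ x : ↥C, (x : H) ^ m ∈ N := by
    intro x
    have h1 := Subgroup.pow_index_mem (N.subgroupOf C) x
    rw [Subgroup.mem_subgroupOf] at h1
    simpa using h1
  set ψ₀ : ↥C → ↥U := fun x => ⟨(x : H) ^ m, hNU (hpowN x)⟩ with hψ₀
  set ψ : ↥C → ℤ_[p] := fun x => Multiplicative.toAdd (f (ψ₀ x)) with hψ
  have hψ₀mul : ∀ x y : ↥C, ψ₀ (x * y) = ψ₀ x * ψ₀ y := by
    intro x y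
    apply Subtype.ext
    have hc : Commute (x : H) (y : H) := hCcommH _ _ x.2 y.2
    simp only [hψ₀, Subgroup.coe_mul]
    exact hc.mul_pow m
  have hψadd : ∀ x y : ↥C, ψ (x * y) = ψ x + ψ y := by
    intro x y
    simp only [hψ]
    rw [hψ₀mul, map_mul]
    rfl
  have hψ0 : ψ 1 = 0 := by
    have : ψ₀ 1 = 1 := by apply Subtype.ext; simp [hψ₀]
    simp only [hψ, this, map_one]
    rfl
  -- the m-torsion of C is a finite normal subgroup, hence trivial
  have htor : ∀ x : H, x ∈ C → x ^ m = 1 → x = 1 := by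
    set K : Subgroup H :=
      { carrier := {x | x ∈ C ∧ x ^ m = 1}
        one_mem' := ⟨C.one_mem, one_pow m⟩
        mul_mem' := by
          rintro a b ⟨haC, ham⟩ ⟨hbC, hbm⟩
          refine ⟨C.mul_mem haC hbC, ?_⟩
          rw [(Commute.mul_pow (hCcommH a b haC hbC) m : (a*b)^m = a^m * b^m), ham, hbm, mul_one]
        inv_mem' := by
          rintro a ⟨haC, ham⟩
          exact ⟨C.inv_mem haC, by rw [inv_pow, ham, inv_one]⟩ } with hK
    have hKnormal : K.Normal := by
      constructor
      rintro x ⟨hxC, hxm⟩ h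
      refine ⟨hCnormal.conj_mem x hxC h, ?_⟩
      have : (h * x * h⁻¹) ^ m = h * x ^ m * h⁻¹ := by
        rw [← MulAut.conj_apply, ← map_pow, MulAut.conj_apply]
      rw [this, hxm, mul_one, mul_inv_cancel]
    have hKfin : (K : Set H).Finite := by
      rw [← Set.finite_coe_iff]
      refine Finite.of_injective (fun k : ↥K => (QuotientGroup.mk (k : H) : H ⧸ U)) ?_
      intro a b hab
      have hw : ((a : H))⁻¹ * b ∈ U := (QuotientGroup.eq (s := U)).mp hab
      have hwC : ((a : H))⁻¹ * b ∈ C := C.mul_mem (C.inv_mem a.2.1) b.2.1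
      have hcomm : Commute ((a : H))⁻¹ (b : H) :=
        (Commute.inv_left (hCcommH _ _ a.2.1 b.2.1))
      have hwm : (((a : H))⁻¹ * (b : H)) ^ m = 1 := by
        rw [hcomm.mul_pow, inv_pow, a.2.2, b.2.2, inv_one, one_mul]
      have := hUtf ⟨_, hw⟩ m hm0 (by
        apply Subtype.ext
        simpa using hwm)
      have h1 : ((a : H))⁻¹ * (b : H) = 1 := congrArg Subtype.val this
      apply Subtype.ext
      exact (inv_mul_eq_one.mp h1)
    have hKbot : K = ⊥ := hnofin K hKnormal hKfin
    intro x hxC hxm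
    have : x ∈ K := ⟨hxC, hxm⟩
    rw [hKbot, Subgroup.mem_bot] at this
    exact this
  have hψinj : Function.Injective ψ := by
    intro x y hxy
    have h1 : ψ₀ x = ψ₀ y := f.injective (by
      have : Multiplicative.toAdd (f (ψ₀ x)) = Multiplicative.toAdd (f (ψ₀ y)) := hxy
      exact Multiplicative.toAdd.injective this)
    have h2 : (x : H) ^ m = (y : H) ^ m := congrArg Subtype.val h1
    have hcomm : Commute ((x : H))⁻¹ (y : H) :=
      (Commute.inv_left (hCcommH _ _ x.2 y.2))
    have h3 : (((x : H))⁻¹ * (y : H)) ^ m = 1 := by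
      rw [hcomm.mul_pow, inv_pow, h2, inv_mul_cancel]
    have h4 := htor _ (C.mul_mem (C.inv_mem x.2) y.2) h3
    have h5 : (x : H) = (y : H) := by
      have := inv_mul_eq_one.mp h4
      exact this
    exact Subtype.ext h5
  -- continuity of ψ
  have hψ₀c : Continuous ψ₀ := by
    apply Continuous.subtype_mk
    exact (continuous_subtype_val).pow m
  have hψc : Continuous ψ := by
    exact (continuous_toAdd.comp (hfc.comp hψ₀c) : _)
  haveI : CompactSpace ↥C := isCompact_iff_compactSpace.mp hCclosed.isCompact
  have hSclosed : IsClosed (Set.range ψ) := (isCompact_range hψc).isClosed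
  -- ψ of zpow
  have hψzpow : ∀ (n : ℤ) (x : ↥C), ψ (x ^ n) = (n : ℤ_[p]) * ψ x := by
    intro n x
    have h0 : ψ₀ (x ^ n) = (ψ₀ x) ^ n := by
      apply Subtype.ext
      have hc : ((x ^ n : ↥C) : H) = ((x : H)) ^ n := by
        exact SubgroupClass.coe_zpow x n
      simp only [hψ₀, hc, SubgroupClass.coe_zpow]
      rw [← zpow_natCast, ← zpow_natCast, ← zpow_mul, ← zpow_mul, mul_comm]
    simp only [hψ, h0, map_zpow]
    rw [toAdd_zpow, zsmul_eq_mul]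
  -- the range of ψ is an ideal
  set M : Ideal ℤ_[p] :=
    { carrier := Set.range ψ
      zero_mem' := ⟨1, hψ0⟩
      add_mem' := by
        rintro a b ⟨x, rfl⟩ ⟨y, rfl⟩
        exact ⟨x * y, hψadd x y⟩
      smul_mem' := by
        intro a s hs
        obtain ⟨x, rfl⟩ := hs
        rw [smul_eq_mul]
        set A : Set ℤ_[p] := (fun a => a * ψ x) ⁻¹' (Set.range ψ) with hA
        have hAclosed : IsClosed A := hSclosed.preimage (continuous_id.mul continuous_const)
        have hsub : Set.range (Int.cast : ℤ → ℤ_[p]) ⊆ A := by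
          rintro _ ⟨n, rfl⟩
          exact ⟨x ^ n, by simpa using hψzpow n x⟩
        have huniv : (Set.univ : Set ℤ_[p]) ⊆ A := by
          rw [← PadicInt.denseRange_intCast.closure_range]
          exact hAclosed.closure_subset_iff.mpr hsub
        exact huniv (Set.mem_univ a) } with hM
  obtain ⟨g₀, hg₀⟩ := (IsPrincipalIdealRing.principal M).principal
  -- C is nontrivial, so g₀ ≠ 0
  haveI : Nontrivial ↥U := f.toEquiv.nontrivial
  obtain ⟨u0, hu0⟩ := exists_ne (1 : ↥U)
  have hg₀ne : g₀ ≠ 0 := by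
    intro h0
    set x0 : ↥C := ⟨(u0 : H), hUC u0.2⟩ with hx0
    have hx0ne : x0 ≠ 1 := by
      intro h
      have h2 : (u0 : H) = 1 := congrArg Subtype.val h
      exact hu0 (Subtype.ext h2)
    have hψx0 : ψ x0 ≠ 0 := by
      intro h
      exact hx0ne (hψinj (by rw [h, hψ0]))
    have : ψ x0 ∈ M := ⟨x0, rfl⟩
    rw [hg₀, h0] at this
    rw [Submodule.span_zero_singleton, Submodule.mem_bot] at this
    exact hψx0 this
  -- the homeomorphism βh : C ≃ₜ ℤ_[p]
  set δ : ℤ_[p] → ℤ_[p] := fun a => g₀ * a with hδ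
  have hδinj : Function.Injective δ := mul_right_injective₀ hg₀ne
  have hrangeδ : Set.range δ = Set.range ψ := by
    ext a
    constructor
    · rintro ⟨c, rfl⟩
      have h1 : c • g₀ ∈ Submodule.span ℤ_[p] {g₀} :=
        Submodule.smul_mem _ c (Submodule.mem_span_singleton_self g₀)
      have : δ c ∈ M := by
        rw [hg₀]
        simpa [hδ, smul_eq_mul, mul_comm] using h1
      exact this
    · intro ha
      have : a ∈ M := ha
      rw [hg₀] at this
      rw [Submodule.mem_span_singleton] at this
      obtain ⟨c, hc⟩ := this
      exact ⟨c, by simpa [hδ, smul_eq_mul, mul_comm] using hc⟩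
  have hδc : Continuous δ := continuous_const.mul continuous_id
  set eψ : ↥C ≃ₜ ↥(Set.range ψ) :=
    Continuous.homeoOfEquivCompactToT2 (f := Equiv.ofInjective ψ hψinj)
      (Continuous.subtype_mk hψc _) with heψ
  set eδ : ℤ_[p] ≃ₜ ↥(Set.range δ) :=
    Continuous.homeoOfEquivCompactToT2 (f := Equiv.ofInjective δ hδinj)
      (Continuous.subtype_mk hδc _) with heδ
  set eδ' : ℤ_[p] ≃ₜ ↥(Set.range ψ) := eδ.trans (Homeomorph.setCongr hrangeδ) with heδ'
  set βh : ↥C ≃ₜ ℤ_[p] := eψ.trans eδ'.symm with hβh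
  have hβkey : ∀ x : ↥C, g₀ * βh x = ψ x := by
    intro x
    have h1 : eδ' (βh x) = eψ x := by
      simp only [hβh, Homeomorph.trans_apply]
      exact eδ'.apply_symm_apply _
    have h2 : (eδ' (βh x) : ℤ_[p]) = g₀ * βh x := rfl
    have h3 : ((eψ x : ℤ_[p])) = ψ x := rfl
    rw [← h2, h1, h3]
  have hβadd : ∀ x y : ↥C, βh (x * y) = βh x + βh y := by
    intro x y
    apply mul_left_cancel₀ hg₀ne
    rw [mul_add, hβkey, hβkey, hβkey, hψadd]
  have hβadd' : ∀ a b : ℤ_[p], βh.symm (a + b) = βh.symm a * βh.symm b := by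
    intro a b
    apply βh.toEquiv.injective
    show βh _ = βh _
    rw [hβadd, βh.apply_symm_apply, βh.apply_symm_apply, βh.apply_symm_apply]
  -- C is all of H
  have hCtop : C = ⊤ := by
    by_contra hne
    obtain ⟨x, hx⟩ : ∃ x : H, x ∉ C := by
      by_contra hall
      push_neg at hall
      exact hne ((Subgroup.eq_top_iff' C).mpr hall)
    have hPQ : IsPGroup p (H ⧸ C) := hpro C hCopen
    set xb : H ⧸ C := QuotientGroup.mk x with hxb
    have hxb1 : xb ≠ 1 := by
      intro h
      exact hx ((QuotientGroup.eq_one_iff x).mp h)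
    obtain ⟨k, hk⟩ := hPQ xb
    classical
    have hP : ∃ k, xb ^ p ^ k = 1 := ⟨k, hk⟩
    have hk₀spec : xb ^ p ^ (Nat.find hP) = 1 := Nat.find_spec hP
    have hk₀ne : Nat.find hP ≠ 0 := by
      intro h
      rw [h, pow_zero, pow_one] at hk₀spec
      exact hxb1 hk₀spec
    set gb : H ⧸ C := xb ^ p ^ (Nat.find hP - 1) with hgb
    have hgb1 : gb ≠ 1 := by
      intro h
      exact Nat.find_min hP (Nat.sub_lt (Nat.pos_of_ne_zero hk₀ne) one_pos) h
    have hgbp : gb ^ p = 1 := by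
      rw [hgb, ← pow_mul, ← pow_succ]
      rw [Nat.sub_add_cancel (Nat.one_le_iff_ne_zero.mpr hk₀ne)]
      exact hk₀spec
    obtain ⟨g, hg⟩ := QuotientGroup.mk_surjective gb
    have hgC : g ∉ C := by
      intro h
      apply hgb1
      rw [← hg]
      exact (QuotientGroup.eq_one_iff g).mpr h
    have hgpC : g ^ p ∈ C := by
      rw [← QuotientGroup.eq_one_iff]
      have : (QuotientGroup.mk (g ^ p) : H ⧸ C) = gb ^ p := by
        rw [← hg]
        rfl
      rw [this, hgbp]
    -- the conjugation map on C
    set σ : ↥C → ↥C := fun c => ⟨g * c * g⁻¹, hCnormal.conj_mem c.1 c.2 g⟩ with hσ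
    have hσmul : ∀ c d : ↥C, σ (c * d) = σ c * σ d := by
      intro c d
      apply Subtype.ext
      show g * (c * d : ↥C) * g⁻¹ = (g * c * g⁻¹) * (g * d * g⁻¹)
      rw [Subgroup.coe_mul]
      group
    set τ : ℤ_[p] → ℤ_[p] := fun a => βh (σ (βh.symm a)) with hτ
    have hτadd : ∀ a b, τ (a + b) = τ a + τ b := by
      intro a b
      simp only [hτ]
      rw [hβadd', hσmul, hβadd]
    set F : ℤ_[p] →+ ℤ_[p] := AddMonoidHom.mk' τ hτadd with hF
    have hFmul := aux_padic_addHom_eq_mul F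
    set c₀ : ℤ_[p] := F 1 with hc₀
    have hσiter : ∀ (n : ℕ) (c : ↥C), ((σ^[n] c : ↥C) : H) = g ^ n * c * (g ^ n)⁻¹ := by
      intro n
      induction n with
      | zero => intro c; simp
      | succ n ih =>
        intro c
        rw [Function.iterate_succ_apply, ih (σ c)]
        have h1 : ((σ c : ↥C) : H) = g * c * g⁻¹ := rfl
        rw [h1, pow_succ]
        group
    have hσp : ∀ c : ↥C, σ^[p] c = c := by
      intro c
      apply Subtype.ext
      rw [hσiter p c]
      have hcomm := hCcommH (g ^ p) (c : H) hgpC c.2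
      rw [hcomm]
      group
    have hFiter : ∀ (n : ℕ) (a : ℤ_[p]), F^[n] a = βh (σ^[n] (βh.symm a)) := by
      intro n
      induction n with
      | zero => intro a; simp
      | succ n ih =>
        intro a
        rw [Function.iterate_succ_apply', Function.iterate_succ_apply', ih]
        show τ _ = _
        simp only [hτ]
        rw [βh.symm_apply_apply]
    have hFiter' : ∀ (n : ℕ) (a : ℤ_[p]), F^[n] a = a * c₀ ^ n := by
      intro n
      induction n with
      | zero => intro a; simp
      | succ n ih =>
        intro a
        rw [Function.iterate_succ_apply', ih, hFmul, pow_succ]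
        ring
    have hc₀p : c₀ ^ p = 1 := by
      have h1 := hFiter p 1
      have h2 := hFiter' p 1
      rw [h1, hσp, βh.apply_symm_apply] at h2
      simpa using h2.symm
    have hc₀1 : c₀ = 1 := aux_padic_pow_p_eq_one hodd c₀ hc₀p
    have hσid : ∀ c : ↥C, σ c = c := by
      intro c
      have h1 := hFiter 1 (βh c)
      have h2 := hFiter' 1 (βh c)
      rw [hc₀1] at h2
      rw [Function.iterate_one] at h1 h2
      rw [βh.symm_apply_apply] at h1
      have h1' : F (βh c) = βh (σ c) := by
        rw [h1]
        congr 1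
      have h3 : βh (σ c) = βh c := by
        rw [← h1', h2, pow_one, mul_one]
      apply βh.toEquiv.injective
      exact h3
    apply hgC
    rw [hC]
    rw [Subgroup.mem_centralizer_iff]
    intro n hn
    have h1 := hσid ⟨n, hNC hn⟩
    have h2 : g * n * g⁻¹ = n := congrArg Subtype.val h1
    calc n * g = (g * n * g⁻¹) * g := by rw [h2]
      _ = g * n := by group
  -- construct the final isomorphism
  have hmemtop : ∀ x : H, x ∈ C := by
    intro x
    rw [hCtop]
    trivial
  refine ⟨{ toFun := fun x => Multiplicative.ofAdd (βh ⟨x, hmemtop x⟩)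
            invFun := fun a => ((βh.symm (Multiplicative.toAdd a) : ↥C) : H)
            left_inv := ?_
            right_inv := ?_
            map_mul' := ?_ }, ?_, ?_⟩
  · intro x
    simp only [toAdd_ofAdd]
    rw [βh.symm_apply_apply]
  · intro a
    simp only []
    rw [Subtype.coe_eta, βh.apply_symm_apply, ofAdd_toAdd]
  · intro x y
    have h1 : (⟨x * y, hmemtop (x*y)⟩ : ↥C) = ⟨x, hmemtop x⟩ * ⟨y, hmemtop y⟩ := rfl
    rw [h1, hβadd, ofAdd_add]
  · show Continuous fun x : H => Multiplicative.ofAdd (βh ⟨x, hmemtop x⟩)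
    exact continuous_ofAdd.comp (βh.continuous.comp (Continuous.subtype_mk continuous_id _))
  · show Continuous fun a : Multiplicative ℤ_[p] => ((βh.symm (Multiplicative.toAdd a) : ↥C) : H)
    exact continuous_subtype_val.comp (βh.symm.continuous.comp continuous_toAdd)





/-- let `p` be an odd prime and `H` a pro-`p` group of finite rank with no
nontrivial finite normal subgroups, of dimension 1 (it has an open uniform subgroup
isomorphic, as a topological group, to `ℤ_p`).  Then `H` itself is isomorphic to `ℤ_p` as a
topological group. -/
theorem stmt_10 {p : ℕ} [Fact p.Prime] (hodd : p ≠ 2)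
    (H : Type*) [Group H] [TopologicalSpace H] [IsTopologicalGroup H]
    [CompactSpace H] [T2Space H] [TotallyDisconnectedSpace H]
    (hpro : IsProPGroup p H) (hrank : HasFiniteRank H)
    (hnofin : ∀ K : Subgroup H, K.Normal → (K : Set H).Finite → K = ⊥)
    (hdim1 : ∃ U : Subgroup H, IsOpen (U : Set H) ∧ IsUniform p U ∧
      ∃ f : U ≃* Multiplicative ℤ_[p], Continuous f ∧ Continuous f.symm) :
    ∃ e : H ≃* Multiplicative ℤ_[p], Continuous e ∧ Continuous e.symm := by
  obtain ⟨U, hUo, -, f, hfc, hfc'⟩ := hdim1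
  exact stmt_10_aux hodd H hpro hnofin U hUo f hfc hfc' 

end
end

section
/- Let p = 2, R a ring of global dimension 1 (hereditary) which is an algebra over the group algebra F_2[C] of the cyclic group C of order 2, flat as an F_2[C]-module, and such that the generator's augmentation c + 1 lies in the Jacobson radical J(R) and R/J(R) is a nonzero F_2[C]-module. Then a contradiction arises: the trivial F_2[C]-module F_2 has infinite projective dimension over F_2[C], but pd_{F_2[C]}(R/J(R)) ≤ pd_R(R/J(R)) = 1. Hence no such R exists: a ring R of global dimension 1 which is flat over F_2[C] cannot have c - 1 ∈ J(R) with R/J(R) ≠ 0. -/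
open CategoryTheory Opposite

universe u

noncomputable section StmtAux

namespace Stmt11Aux

variable {R : Type u} [Ring R]

/-- the canonical surjection from the free module on `N` to `N`. -/
def tot (N : ModuleCat.{u} R) : (N →₀ R) →ₗ[R] N :=
  Finsupp.linearCombination R id

lemma tot_single (N : ModuleCat.{u} R) (n : N) : tot N (Finsupp.single n 1) = n := by
  simp [tot]

variable (ε : R)

/-- left annihilator of ε -/
abbrev Kmod : Submodule R R := LinearMap.ker (LinearMap.toSpanSingleton R R ε)

/-- the sequence of syzygies -/
def SS : ℕ → ModuleCat.{u} R
  | 0 => ModuleCat.of R (Kmod ε)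
  | n+1 => ModuleCat.of R (LinearMap.ker (tot (SS n)))

/-- the modules of the resolution -/
def XX : ℕ → ModuleCat.{u} R
  | 0 => ModuleCat.of R R
  | 1 => ModuleCat.of R R
  | n+2 => ModuleCat.of R (SS ε n →₀ R)

/-- the differentials -/
def dd : ∀ n, XX ε (n+1) ⟶ XX ε n
  | 0 => ModuleCat.ofHom (LinearMap.toSpanSingleton R R ε)
  | 1 => ModuleCat.ofHom ((Kmod ε).subtype ∘ₗ tot (SS ε 0))
  | n+2 => ModuleCat.ofHom ((LinearMap.ker (tot (SS ε n))).subtype ∘ₗ tot (SS ε (n+1)))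

lemma sq : ∀ n, dd ε (n+1) ≫ dd ε n = 0 := by
  intro n
  match n with
  | 0 =>
    ext z
    exact LinearMap.mem_ker.mp (tot (SS ε 0) z).2
  | 1 =>
    ext z
    have := (tot (SS ε 1) z).2
    simp only [LinearMap.mem_ker] at this
    show ((Kmod ε).subtype ∘ₗ tot (SS ε 0)) ((LinearMap.ker (tot (SS ε 0))).subtype (tot (SS ε 1) z)) = 0
    exact (congrArg (Kmod ε).subtype this).trans (map_zero _)
  | n+2 =>
    ext z
    have := (tot (SS ε (n+2)) z).2
    simp only [LinearMap.mem_ker] at this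
    show ((LinearMap.ker (tot (SS ε n))).subtype ∘ₗ tot (SS ε (n+1)))
      ((LinearMap.ker (tot (SS ε (n+1)))).subtype (tot (SS ε (n+2)) z)) = 0
    exact (congrArg (LinearMap.ker (tot (SS ε n))).subtype this).trans (map_zero _)

/-- the resolution complex -/
def CC : ChainComplex (ModuleCat.{u} R) ℕ := ChainComplex.of (XX ε) (dd ε) (sq ε)

/-- the resolved module `R ⧸ Rε` -/
def MM : ModuleCat.{u} R := ModuleCat.of R (R ⧸ LinearMap.range (LinearMap.toSpanSingleton R R ε))

instance (n : ℕ) : Projective ((CC ε).X n) := by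
  match n with
  | 0 => exact ModuleCat.projective_of_free (Module.Basis.singleton (Fin 1) R)
  | 1 => exact ModuleCat.projective_of_free (Module.Basis.singleton (Fin 1) R)
  | n+2 => exact ModuleCat.projective_of_free (Finsupp.basisSingleOne (R := R) (ι := SS ε n))

lemma exactAt_succ (n : ℕ) : (CC ε).ExactAt (n + 1) := by
  rw [HomologicalComplex.exactAt_iff' _ (n + 1 + 1) (n + 1) n (by simp) (by simp)]
  rw [ShortComplex.moduleCat_exact_iff]
  dsimp [HomologicalComplex.sc', HomologicalComplex.shortComplexFunctor', CC]
  simp only [ChainComplex.of_d]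
  intro x₂ hx₂
  match n with
  | 0 =>
    -- x₂ : R, dd 0 x₂ = 0 means x₂ ∈ Kmod
    refine ⟨Finsupp.single ⟨x₂, LinearMap.mem_ker.mpr hx₂⟩ 1, ?_⟩
    show (Kmod ε).subtype (tot (SS ε 0) (Finsupp.single ⟨x₂, LinearMap.mem_ker.mpr hx₂⟩ 1)) = x₂
    exact congrArg (Kmod ε).subtype (tot_single (SS ε 0) _)
  | 1 =>
    -- x₂ : SS 0 →₀ R with (subtype ∘ tot) x₂ = 0, so tot x₂ = 0
    have h : tot (SS ε 0) x₂ = 0 := by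
      have h2 : (Kmod ε).subtype (tot (SS ε 0) x₂) = 0 := hx₂
      exact Subtype.ext h2
    refine ⟨Finsupp.single ⟨x₂, h⟩ 1, ?_⟩
    show (LinearMap.ker (tot (SS ε 0))).subtype (tot (SS ε 1) (Finsupp.single ⟨x₂, h⟩ 1)) = x₂
    exact congrArg (LinearMap.ker (tot (SS ε 0))).subtype (tot_single (SS ε 1) _)
  | n+2 =>
    have h : tot (SS ε (n+1)) x₂ = 0 := by
      have h2 : (LinearMap.ker (tot (SS ε n))).subtype (tot (SS ε (n+1)) x₂) = 0 := hx₂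
      exact Subtype.ext h2
    refine ⟨Finsupp.single ⟨x₂, h⟩ 1, ?_⟩
    show (LinearMap.ker (tot (SS ε (n+1)))).subtype (tot (SS ε (n+2)) (Finsupp.single ⟨x₂, h⟩ 1)) = x₂
    exact congrArg (LinearMap.ker (tot (SS ε (n+1)))).subtype (tot_single (SS ε (n+2)) _)

lemma d10_mkQ : (CC ε).d 1 0 ≫ (ModuleCat.ofHom
    (LinearMap.range (LinearMap.toSpanSingleton R R ε)).mkQ) = 0 := by
  show (CC ε).d 1 0 ≫ (_ : XX ε 0 ⟶ MM ε) = 0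
  rw [show (CC ε).d 1 0 = dd ε 0 from ChainComplex.of_d (XX ε) (dd ε) 0]
  apply ModuleCat.hom_ext; apply LinearMap.ext; intro r
  exact (Submodule.Quotient.mk_eq_zero _).2 ⟨r, rfl⟩

/-- the bottom short complex -/
def S0 : ShortComplex (ModuleCat.{u} R) :=
  ShortComplex.mk (dd ε 0) (ModuleCat.ofHom
    (LinearMap.range (LinearMap.toSpanSingleton R R ε)).mkQ : XX ε 0 ⟶ MM ε)
    (by apply ModuleCat.hom_ext; apply LinearMap.ext; intro r; exact (Submodule.Quotient.mk_eq_zero _).2 ⟨r, rfl⟩)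

lemma S0_exact : (S0 ε).Exact := by
  rw [ShortComplex.moduleCat_exact_iff]
  intro x hx
  exact (Submodule.Quotient.mk_eq_zero _ (x := x)).1 hx

instance S0_epi : Epi (S0 ε).g := by
  rw [ModuleCat.epi_iff_surjective]
  exact Submodule.mkQ_surjective (LinearMap.range (LinearMap.toSpanSingleton R R ε))

/-- the projective resolution of `R ⧸ Rε`. -/
def resolution : ProjectiveResolution (MM ε) where
  complex := CC ε
  π := (ChainComplex.toSingle₀Equiv _ _).symm
    ⟨ModuleCat.ofHom (LinearMap.range (LinearMap.toSpanSingleton R R ε)).mkQ, d10_mkQ ε⟩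
  quasiIso := ⟨fun n => by
    cases n with
    | zero =>
      rw [ChainComplex.quasiIsoAt₀_iff, ShortComplex.quasiIso_iff_of_zeros']
      · refine (ShortComplex.exact_and_epi_g_iff_of_iso
          (S₂ := S0 ε) ?_).2 ⟨S0_exact ε, S0_epi ε⟩
        refine ShortComplex.isoMk (Iso.refl _) (Iso.refl _) (Iso.refl _) ?_ ?_
        · simp only [Iso.refl_hom, Category.id_comp, Category.comp_id]
          dsimp [S0, HomologicalComplex.shortComplexFunctor']
          rw [show (CC ε).d 1 0 = dd ε 0 from ChainComplex.of_d (XX ε) (dd ε) 0]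
          rfl
        · simp only [Iso.refl_hom, Category.id_comp, Category.comp_id]
          dsimp [S0, HomologicalComplex.shortComplexFunctor']
          erw [ChainComplex.toSingle₀Equiv_symm_apply_f_zero]
          rfl
      all_goals rfl
    | succ n =>
      rw [quasiIsoAt_iff_exactAt']
      · exact exactAt_succ ε n
      · apply ChainComplex.exactAt_succ_single_obj⟩

theorem key (ε : R)
    (hExt : ∀ M N : ModuleCat.{u} R,
      Subsingleton (((Ext ℤ (ModuleCat.{u} R) 2).obj (op M)).obj N)) :
    ∃ w : R, w * ε = 0 ∧ ∀ x : R, x * ε = 0 → x * w = x := by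
  classical
  haveI := hExt (MM ε) (SS ε 0)
  set P := resolution ε with hP
  set N := SS ε 0 with hN
  have hz : Limits.IsZero ((P.complex.linearYonedaObj ℤ N).homology 2) :=
    Limits.IsZero.of_iso (ModuleCat.isZero_of_subsingleton _) (P.isoExt 2 N).symm
  have hexact : ((P.complex.linearYonedaObj ℤ N).sc' 1 2 3).Exact := by
    rw [← HomologicalComplex.exactAt_iff' _ 1 2 3 (by simp) (by simp),
      HomologicalComplex.exactAt_iff_isZero_homology]
    exact hz
  rw [ShortComplex.moduleCat_exact_iff] at hexact
  have hφ : ((P.complex.linearYonedaObj ℤ N).sc' 1 2 3).g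
      (ModuleCat.ofHom (tot N) : ((P.complex.linearYonedaObj ℤ N).sc' 1 2 3).X₂) = 0 := by
    show ((P.complex.linearYonedaObj ℤ N).d 2 3) (ModuleCat.ofHom (tot N)) = 0
    rw [ChainComplex.linearYonedaObj_d]
    show P.complex.d 3 2 ≫ (ModuleCat.ofHom (tot N) : XX ε 2 ⟶ N) = 0
    rw [show P.complex.d 3 2 = dd ε 2 from ChainComplex.of_d (XX ε) (dd ε) 2]
    ext z
    exact congrArg Subtype.val (LinearMap.mem_ker.mp (tot (SS ε 1) z).2)
  obtain ⟨ψ, hψ⟩ := hexact _ hφ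
  have hψ' : (dd ε 1 : XX ε 2 ⟶ XX ε 1) ≫ (ψ : XX ε 1 ⟶ N) = (ModuleCat.ofHom (tot N) : XX ε 2 ⟶ N) := by
    have h0 : ((P.complex.linearYonedaObj ℤ N).d 1 2) ψ = ModuleCat.ofHom (tot N) := hψ
    rw [ChainComplex.linearYonedaObj_d] at h0
    have h5 : P.complex.d 2 1 ≫ (ψ : XX ε 1 ⟶ N) = (ModuleCat.ofHom (tot N) : XX ε 2 ⟶ N) := h0
    rwa [show P.complex.d 2 1 = dd ε 1 from ChainComplex.of_d (XX ε) (dd ε) 1] at h5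
  let Ψ : XX ε 1 ⟶ N := ψ
  have hψ'' : (dd ε 1 : XX ε 2 ⟶ XX ε 1) ≫ Ψ = (ModuleCat.ofHom (tot N) : XX ε 2 ⟶ N) := hψ'
  have hfix : ∀ k : Kmod ε, Ψ ((k : R)) = k := by
    intro k
    have h6 := congrArg (fun (f : XX ε 2 ⟶ N) => f (Finsupp.single k 1)) hψ''
    simp only [ModuleCat.hom_comp, LinearMap.comp_apply] at h6
    have e1 : (tot N) (Finsupp.single k (1 : R)) = k := tot_single N k
    have e2 : ((dd ε 1) (Finsupp.single k (1 : R)) : ↑(XX ε 1)) = (k : R) := by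
      show (Kmod ε).subtype (tot (SS ε 0) (Finsupp.single k 1)) = (k : R)
      exact congrArg (Kmod ε).subtype (tot_single (SS ε 0) k)
    rw [← e2]
    exact h6.trans e1
  let w : Kmod ε := Ψ ((1 : R) : ↑(XX ε 1))
  refine ⟨(w : R), ?_, ?_⟩
  · have h2 : LinearMap.toSpanSingleton R R ε (w : R) = 0 := w.2
    rwa [LinearMap.toSpanSingleton_apply, smul_eq_mul] at h2
  · intro x hx
    have hxK : x ∈ Kmod ε := by
      simp only [LinearMap.mem_ker, LinearMap.toSpanSingleton_apply, smul_eq_mul]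
      exact hx
    have h3 := hfix ⟨x, hxK⟩
    have h4 : Ψ ((x : R) : ↑(XX ε 1)) = x • Ψ ((1 : R) : ↑(XX ε 1)) := by
      conv_lhs => rw [show ((x : R) : ↑(XX ε 1)) = x • ((1 : R) : ↑(XX ε 1)) by
        show x = x • (1 : R); simp]
      exact map_smul Ψ.hom x _
    rw [h4] at h3
    have h3' : x • w = (⟨x, hxK⟩ : Kmod ε) := h3
    have h7 := congrArg (Subtype.val) h3'
    simpa [smul_eq_mul] using h7

end Stmt11Aux

namespace Stmt11GA

abbrev Amod := MonoidAlgebra (ZMod 2) (Multiplicative (ZMod 2))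

noncomputable def gA : Multiplicative (ZMod 2) := Multiplicative.ofAdd 1

noncomputable def aA : Amod :=
  MonoidAlgebra.of (ZMod 2) (Multiplicative (ZMod 2)) gA + 1

lemma aA_eq : aA = MonoidAlgebra.single gA 1 + MonoidAlgebra.single 1 1 := by
  rw [aA, MonoidAlgebra.one_def]
  rfl

lemma two_elems : ∀ g : Multiplicative (ZMod 2), g = 1 ∨ g = gA := by decide

lemma zmod2_cancel : ∀ p q : ZMod 2, p + q = 0 → q = p := by decide

lemma decomp (x : Amod) :
    x = MonoidAlgebra.single 1 (x.coeff 1) + MonoidAlgebra.single gA (x.coeff gA) := by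
  classical
  refine MonoidAlgebra.ext (Finsupp.ext fun h => ?_)
  show x.coeff h = (Finsupp.single (1 : Multiplicative (ZMod 2)) (x.coeff 1) + Finsupp.single gA (x.coeff gA)) h
  rcases two_elems h with rfl | rfl
  · simp [Finsupp.single_apply, (by decide : gA ≠ (1 : Multiplicative (ZMod 2)))]
  · simp [Finsupp.single_apply, (by decide : (1 : Multiplicative (ZMod 2)) ≠ gA)]

lemma mul_aA (p q : ZMod 2) :
    (MonoidAlgebra.single (1 : Multiplicative (ZMod 2)) p + MonoidAlgebra.single gA q) * aA =
      MonoidAlgebra.single (1 : Multiplicative (ZMod 2)) (p + q) +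
        MonoidAlgebra.single gA (p + q) := by
  rw [aA_eq, add_mul, mul_add, mul_add, MonoidAlgebra.single_mul_single,
    MonoidAlgebra.single_mul_single, MonoidAlgebra.single_mul_single,
    MonoidAlgebra.single_mul_single]
  rw [(by decide : gA * gA = (1 : Multiplicative (ZMod 2)))]
  simp only [one_mul, mul_one]
  rw [MonoidAlgebra.single_add, MonoidAlgebra.single_add]
  abel

lemma aA_sq : aA * aA = 0 := by
  have h : aA = MonoidAlgebra.single (1 : Multiplicative (ZMod 2)) 1 +
      MonoidAlgebra.single gA 1 := by rw [aA_eq]; abel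
  nth_rewrite 1 [h]
  rw [mul_aA]
  rw [(by decide : (1 : ZMod 2) + 1 = 0)]
  simp

lemma ann (x : Amod) (hx : x * aA = 0) : ∃ y : Amod, y * aA = x := by
  have hd := decomp x
  set p := x.coeff 1
  set q := x.coeff gA
  rw [hd, mul_aA] at hx
  classical
  have hpq : p + q = 0 := by
    have hx' : Finsupp.single (1 : Multiplicative (ZMod 2)) (p + q) + Finsupp.single gA (p + q)
        = (0 : Multiplicative (ZMod 2) →₀ ZMod 2) := congrArg MonoidAlgebra.coeff hx
    have h9 := DFunLike.congr_fun hx' 1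
    simpa [Finsupp.single_apply, (by decide : gA ≠ (1 : Multiplicative (ZMod 2)))] using h9
  have hqp : q = p := zmod2_cancel p q hpq
  refine ⟨MonoidAlgebra.single (1 : Multiplicative (ZMod 2)) p, ?_⟩
  have : MonoidAlgebra.single (1 : Multiplicative (ZMod 2)) p =
      MonoidAlgebra.single (1 : Multiplicative (ZMod 2)) p + MonoidAlgebra.single gA 0 := by simp
  rw [this, mul_aA, add_zero, hd, hqp]

lemma exact_aA : Function.Exact (LinearMap.toSpanSingleton Amod Amod aA)
    (LinearMap.toSpanSingleton Amod Amod aA) := by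
  intro y
  constructor
  · intro hy
    obtain ⟨z, hz⟩ := ann y (by simpa [LinearMap.toSpanSingleton_apply, smul_eq_mul] using hy)
    exact ⟨z, by simpa [LinearMap.toSpanSingleton_apply, smul_eq_mul] using hz⟩
  · rintro ⟨z, rfl⟩
    simp only [LinearMap.toSpanSingleton_apply, smul_eq_mul]
    rw [mul_assoc, aA_sq, mul_zero]

end Stmt11GA

end StmtAux

set_option synthInstance.maxHeartbeats 1000000 in
set_option maxHeartbeats 1600000 in
theorem stmt11_main (R : Type u) [Ring R]
    (ι : MonoidAlgebra (ZMod 2) (Multiplicative (ZMod 2)) →+* R) :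
    letI : Module (MonoidAlgebra (ZMod 2) (Multiplicative (ZMod 2))) R := Module.compHom R ι
    Module.Flat (MonoidAlgebra (ZMod 2) (Multiplicative (ZMod 2))) R →
    (∀ M N : ModuleCat.{u} R,
      Subsingleton (((Ext ℤ (ModuleCat.{u} R) 2).obj (op M)).obj N)) →
    ι (MonoidAlgebra.of (ZMod 2) (Multiplicative (ZMod 2)) (Multiplicative.ofAdd 1) + 1)
      ∈ (⊥ : Ideal R).jacobson →
    (⊥ : Ideal R).jacobson ≠ ⊤ → False := by
  intro hflat hExt hJ hJtop
  classical
  set ε : R := ι Stmt11GA.aA with hεdef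
  have hJε : ε ∈ (⊥ : Ideal R).jacobson := hJ
  have hε2 : ε * ε = 0 := by rw [hεdef, ← map_mul, Stmt11GA.aA_sq, map_zero]
  -- consequence of flatness
  have hann : ∀ r : R, ε * r = 0 → ∃ s : R, r = ε * s := by
    letI : Module Stmt11GA.Amod R := Module.compHom R ι
    haveI : Module.Flat Stmt11GA.Amod R := hflat
    intro r hr
    have hEx := Module.Flat.lTensor_exact (R := Stmt11GA.Amod) R Stmt11GA.exact_aA
    set L := LinearMap.lTensor R (LinearMap.toSpanSingleton Stmt11GA.Amod Stmt11GA.Amod Stmt11GA.aA) with hL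
    set e := TensorProduct.rid Stmt11GA.Amod R with he
    have hcomm : ∀ z : TensorProduct Stmt11GA.Amod R Stmt11GA.Amod, e (L z) = Stmt11GA.aA • (e z) := by
      intro z
      induction z using TensorProduct.induction_on with
      | zero => rw [map_zero, map_zero, smul_zero]
      | tmul s x =>
        rw [hL, LinearMap.lTensor_tmul, he, TensorProduct.rid_tmul, TensorProduct.rid_tmul,
          LinearMap.toSpanSingleton_apply, smul_eq_mul, mul_comm, mul_smul]
      | add z1 z2 h1 h2 =>
        rw [map_add, map_add, h1, h2, map_add, smul_add]
    have h0 : L (e.symm r) = 0 := by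
      have h1 : e (L (e.symm r)) = Stmt11GA.aA • r := by rw [hcomm, e.apply_symm_apply]
      have h2 : (Stmt11GA.aA • r : R) = ε * r := rfl
      have h3 : e (L (e.symm r)) = 0 := by rw [h1, h2, hr]
      have h4 := congrArg e.symm h3
      rwa [e.symm_apply_apply, map_zero] at h4
    obtain ⟨z', hz'⟩ := (hEx (e.symm r)).mp h0
    refine ⟨e z', ?_⟩
    have h5 : r = e (L z') := by rw [hz', e.apply_symm_apply]
    rw [h5, hcomm]
    rfl
  -- the retraction from vanishing Ext²
  obtain ⟨w, hwε, hfix⟩ := Stmt11Aux.key ε hExt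
  set u := 1 - w with hu
  have hεw : ε * w = ε := hfix ε hε2
  have huz : ε * u = 0 := by rw [hu, mul_sub, mul_one, hεw, sub_self]
  obtain ⟨s, hs⟩ := hann u huz
  have hu_mem : u ∈ (⊥ : Ideal R).jacobson := by
    rw [hs]
    exact Ideal.mul_mem_right s _ hJε
  have hw2 : w * w = w := hfix w hwε
  have hu2 : u * u = u := by
    rw [hu, sub_mul, one_mul, mul_sub, mul_one, hw2]
    abel
  obtain ⟨z, hz⟩ := Ideal.mem_jacobson_iff.mp hu_mem (-1)
  rw [Ideal.mem_bot] at hz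
  rw [mul_neg_one, neg_mul, neg_add_eq_sub] at hz
  have h10 : z - z * u = 1 := sub_eq_zero.mp hz
  have hu0 : u = 0 := by
    have h11 := congrArg (fun t => t * u) h10
    simp only [one_mul, sub_mul, mul_assoc, hu2] at h11
    rw [sub_self] at h11
    exact h11.symm
  have hw1 : w = 1 := by
    have := hu0
    rw [hu, sub_eq_zero] at this
    exact this.symm
  have hε0 : ε = 0 := by rw [hw1, one_mul] at hwε; exact hwε
  obtain ⟨s1, hs1⟩ := hann 1 (by rw [hε0, zero_mul])
  rw [hε0, zero_mul] at hs1
  apply hJtop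
  rw [Ideal.eq_top_iff_one, hs1]
  exact Submodule.zero_mem _

/-- let `C = ⟨c⟩` be cyclic of order 2 and `A = F₂[C]` its group algebra.
There is no ring `R` of global dimension `≤ 1` (expressed by vanishing of `Ext²`), equipped
with a ring homomorphism `ι : A →+* R` making `R` a flat `A`-module, such that
`ι(c + 1)` lies in the Jacobson radical `J(R)` and `R/J(R) ≠ 0`. -/
theorem stmt_11 (R : Type u) [Ring R]
    (ι : MonoidAlgebra (ZMod 2) (Multiplicative (ZMod 2)) →+* R) :
    letI : Module (MonoidAlgebra (ZMod 2) (Multiplicative (ZMod 2))) R := Module.compHom R ι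
    Module.Flat (MonoidAlgebra (ZMod 2) (Multiplicative (ZMod 2))) R →
    (∀ M N : ModuleCat.{u} R,
      Subsingleton (((Ext ℤ (ModuleCat.{u} R) 2).obj (op M)).obj N)) →
    ι (MonoidAlgebra.of (ZMod 2) (Multiplicative (ZMod 2)) (Multiplicative.ofAdd 1) + 1)
      ∈ (⊥ : Ideal R).jacobson →
    (⊥ : Ideal R).jacobson ≠ ⊤ → False := by
  exact stmt11_main R ι
end

section
/- Let g be a finite-dimensional Lie algebra over a field k and n an ideal of g. Then λ(g) = λ(n) + λ(g/n), where λ(h) denotes the maximal length of a chain of Lie subalgebras 0 = h_0 ⊊ h_1 ⊊ ⋯ ⊊ h_m = h of h. -/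
/-- `lieChainLength k L` is the supremum (in `ℕ∞`) of the lengths `m` of strictly increasing
chains `⊥ = h₀ ⊊ h₁ ⊊ ⋯ ⊊ h_m = ⊤` of Lie subalgebras of `L`. -/
noncomputable def lieChainLength (k : Type*) (L : Type*) [CommRing k] [LieRing L]
    [LieAlgebra k L] : ℕ∞ :=
  sSup {m : ℕ∞ | ∃ mm : ℕ, m = mm ∧ ∃ c : Fin (mm + 1) → LieSubalgebra k L,
    StrictMono c ∧ c 0 = ⊥ ∧ c (Fin.last mm) = ⊤}

section Aux

/-- The quotient map `g → g ⧸ n` as a Lie algebra homomorphism. -/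
def lieQuotHom {k g : Type*} [CommRing k] [LieRing g] [LieAlgebra k g] (n : LieIdeal k g) :
    g →ₗ⁅k⁆ g ⧸ n :=
  { (LieSubmodule.Quotient.mk' (n : LieSubmodule k g g)).toLinearMap with
    map_lie' := rfl }

lemma lieQuotHom_surjective {k g : Type*} [CommRing k] [LieRing g] [LieAlgebra k g]
    (n : LieIdeal k g) : Function.Surjective (lieQuotHom n) :=
  fun y => Quotient.inductionOn' y fun x => ⟨x, rfl⟩

lemma lieQuotHom_eq_zero_iff {k g : Type*} [CommRing k] [LieRing g] [LieAlgebra k g]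
    (n : LieIdeal k g) (x : g) : lieQuotHom n x = 0 ↔ x ∈ n :=
  LieSubmodule.Quotient.mk_eq_zero (n : LieSubmodule k g g)

variable {k L : Type*} [CommRing k] [LieRing L] [LieAlgebra k L]

lemma le_lieChainLength (p : LTSeries (LieSubalgebra k L)) (h0 : p.head = ⊥)
    (h1 : p.last = ⊤) : (p.length : ℕ∞) ≤ lieChainLength k L :=
  le_sSup ⟨p.length, rfl, p.toFun, p.strictMono, h0, h1⟩

lemma fin_strictMono_le {m : ℕ} (f : Fin (m + 1) → ℕ) (hf : StrictMono f) (i : Fin (m + 1)) :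
    (i : ℕ) ≤ f i := by
  induction i using Fin.induction with
  | zero => exact Nat.zero_le _
  | succ i ih =>
    have h := hf (Fin.castSucc_lt_succ (i := i))
    simp only [Fin.coe_castSucc] at ih
    simp only [Fin.val_succ]
    omega

lemma chain_le_finrank {k L : Type*} [Field k] [LieRing L] [LieAlgebra k L]
    [FiniteDimensional k L] {m : ℕ} (c : Fin (m + 1) → LieSubalgebra k L)
    (hc : StrictMono c) (htop : c (Fin.last m) = ⊤) : m ≤ Module.finrank k L := by
  have hmono : StrictMono (fun K : LieSubalgebra k L => (K : Submodule k L)) := by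
    intro a b h
    rw [lt_iff_le_not_ge] at h ⊢
    simpa only [LieSubalgebra.toSubmodule_le_toSubmodule] using h
  have hf : StrictMono fun i => Module.finrank k ((c i : Submodule k L)) :=
    Submodule.finrank_strictMono.comp (hmono.comp hc)
  have h := fin_strictMono_le _ hf (Fin.last m)
  simp only [Fin.val_last] at h
  have h2 : (m : ℕ) ≤ Module.finrank k ((c (Fin.last m) : Submodule k L)) := h
  rw [htop] at h2
  simpa [LieSubalgebra.top_toSubmodule] using h2

/-- Attainment of the supremum. -/
lemma lieChainLength_spec {k L : Type*} [Field k] [LieRing L] [LieAlgebra k L]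
    [FiniteDimensional k L] :
    ∃ p : LTSeries (LieSubalgebra k L), p.head = ⊥ ∧ p.last = ⊤ ∧
      lieChainLength k L = p.length := by
  set S := {m : ℕ∞ | ∃ mm : ℕ, m = mm ∧ ∃ c : Fin (mm + 1) → LieSubalgebra k L,
    StrictMono c ∧ c 0 = ⊥ ∧ c (Fin.last mm) = ⊤} with hS
  have hne : S.Nonempty := by
    by_cases h : (⊥ : LieSubalgebra k L) = ⊤
    · haveI : Subsingleton (Fin (0 + 1)) := Fin.subsingleton_one
      exact ⟨(0 : ℕ), 0, rfl, fun _ => ⊥, Subsingleton.strictMono _, rfl, h⟩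
    · refine ⟨(1 : ℕ), 1, rfl, ![⊥, ⊤], ?_, rfl, rfl⟩
      intro i j hij
      fin_cases i <;> fin_cases j <;> simp_all <;>
        exact lt_of_le_of_ne bot_le h
  have hsub : S ⊆ Nat.cast '' Set.Iic (Module.finrank k L) := by
    rintro m ⟨mm, rfl, c, hc, h0, h1⟩
    exact ⟨mm, chain_le_finrank c hc h1, rfl⟩
  have hfin : S.Finite := ((Set.finite_Iic _).image _).subset hsub
  have hmem : sSup S ∈ S := hne.csSup_mem hfin
  obtain ⟨mm, heq, c, hc, h0, h1⟩ := hmem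
  exact ⟨LTSeries.mk mm c hc, h0, h1, heq⟩

end Aux

section Split

variable {α β : Type*} [PartialOrder α] [PartialOrder β]

lemma LTSeries.extend (r : LTSeries β) (b : β) (h : r.last ≤ b) :
    ∃ r' : LTSeries β, r'.head = r.head ∧ r'.last = b ∧ r.length ≤ r'.length ∧
      (r.last < b → r.length + 1 ≤ r'.length) := by
  rcases h.lt_or_eq with h' | h'
  · exact ⟨r.snoc b h', by simp, by simp, by simp, by simp⟩
  · exact ⟨r, rfl, h'.symm ▸ rfl, le_refl _, fun hc => absurd h' hc.ne⟩

lemma LTSeries.split : ∀ (p : LTSeries (α × β)),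
    ∃ (q : LTSeries α) (r : LTSeries β), q.head = p.head.1 ∧ q.last = p.last.1 ∧
      r.head = p.head.2 ∧ r.last = p.last.2 ∧ p.length ≤ q.length + r.length := by
  suffices H : ∀ (m : ℕ) (p : LTSeries (α × β)), p.length = m →
      ∃ (q : LTSeries α) (r : LTSeries β), q.head = p.head.1 ∧ q.last = p.last.1 ∧
      r.head = p.head.2 ∧ r.last = p.last.2 ∧ p.length ≤ q.length + r.length by
    exact fun p => H p.length p rfl
  intro m
  induction m with
  | zero =>
    intro p hl
    have hpl : p.last = p.head := by
      show p.toFun _ = p.toFun _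
      congr 1
      ext
      simp [hl]
    exact ⟨RelSeries.singleton _ p.head.1, RelSeries.singleton _ p.head.2, rfl,
      by rw [hpl]; rfl, rfl, by rw [hpl]; rfl, by simp [hl]⟩
  | succ m ih =>
    intro p hl
    have hl' : p.eraseLast.length = m := by simp [hl]
    obtain ⟨q, r, hq1, hq2, hr1, hr2, hlen⟩ := ih p.eraseLast hl'
    have hstep : p.eraseLast.last < p.last :=
      p.eraseLast_last_rel_last (by omega)
    have h1 : p.eraseLast.last.1 ≤ p.last.1 := (Prod.le_def.mp hstep.le).1
    have h2 : p.eraseLast.last.2 ≤ p.last.2 := (Prod.le_def.mp hstep.le).2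
    have hor : p.eraseLast.last.1 < p.last.1 ∨ p.eraseLast.last.2 < p.last.2 :=
      (Prod.lt_iff.mp hstep).imp (·.1) (·.2)
    obtain ⟨q', hq'1, hq'2, hq'3, hq'4⟩ := LTSeries.extend q p.last.1 (hq2 ▸ h1)
    obtain ⟨r', hr'1, hr'2, hr'3, hr'4⟩ := LTSeries.extend r p.last.2 (hr2 ▸ h2)
    refine ⟨q', r', by rw [hq'1, hq1, RelSeries.head_eraseLast], hq'2,
      by rw [hr'1, hr1, RelSeries.head_eraseLast], hr'2, ?_⟩
    rw [hl'] at hlen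
    rcases hor with hor | hor
    · have := hq'4 (hq2 ▸ hor)
      omega
    · have := hr'4 (hr2 ▸ hor)
      omega

end Split

/-- for a finite-dimensional Lie algebra `g` over a field `k` and an ideal
`n ⊆ g`, the maximal subalgebra chain lengths satisfy `λ(g) = λ(n) + λ(g/n)`. -/
theorem stmt_17 (k : Type*) [Field k] (g : Type*) [LieRing g] [LieAlgebra k g]
    [FiniteDimensional k g] (n : LieIdeal k g) :
    lieChainLength k g = lieChainLength k n + lieChainLength k (g ⧸ n) := by
  classical
  have instn : FiniteDimensional k n := inferInstance
  have instq : FiniteDimensional k (g ⧸ n) := inferInstance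
  set ι : (↥n) →ₗ⁅k⁆ g := n.incl with hι
  have hιinj : Function.Injective ι := n.incl_injective
  set π : g →ₗ⁅k⁆ g ⧸ n := lieQuotHom n with hπ
  have hπsurj : Function.Surjective π := lieQuotHom_surjective n
  -- basic computations
  have hmapι_mono : ∀ {a b : LieSubalgebra k ↥n}, a ≤ b → a.map ι ≤ b.map ι := by
    intro a b hab x hx
    rw [LieSubalgebra.mem_map] at hx ⊢
    obtain ⟨y, hy, e⟩ := hx
    exact ⟨y, hab hy, e⟩
  have hmapπ_mono : ∀ {a b : LieSubalgebra k g}, a ≤ b → a.map π ≤ b.map π := by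
    intro a b hab x hx
    rw [LieSubalgebra.mem_map] at hx ⊢
    obtain ⟨y, hy, e⟩ := hx
    exact ⟨y, hab hy, e⟩
  have hcomapι_bot : (⊥ : LieSubalgebra k g).comap ι = ⊥ := by
    ext x
    constructor
    · intro hx
      have hx' : ι x ∈ (⊥ : LieSubalgebra k g) := hx
      rw [LieSubalgebra.mem_bot] at hx'
      rw [LieSubalgebra.mem_bot]
      exact hιinj (by simpa using hx')
    · intro hx
      rw [LieSubalgebra.mem_bot] at hx
      subst hx
      show ι 0 ∈ (⊥ : LieSubalgebra k g)
      simp [LieSubalgebra.mem_bot]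
  have hcomapι_top : (⊤ : LieSubalgebra k g).comap ι = ⊤ := by
    ext x
    exact ⟨fun _ => LieSubalgebra.mem_top _, fun _ => LieSubalgebra.mem_top _⟩
  have hmapπ_bot : (⊥ : LieSubalgebra k g).map π = ⊥ := by
    ext x
    rw [LieSubalgebra.mem_map, LieSubalgebra.mem_bot]
    constructor
    · rintro ⟨y, hy, rfl⟩
      rw [LieSubalgebra.mem_bot] at hy
      subst hy
      simp
    · rintro rfl
      exact ⟨0, by simp [LieSubalgebra.mem_bot]⟩
  have hmapπ_top : (⊤ : LieSubalgebra k g).map π = ⊤ := by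
    ext x
    simp only [LieSubalgebra.mem_map, LieSubalgebra.mem_top, iff_true]
    obtain ⟨y, rfl⟩ := hπsurj x
    exact ⟨y, trivial, rfl⟩
  have hmapι_strict : StrictMono (fun K : LieSubalgebra k ↥n => K.map ι) := by
    intro a b hab
    refine lt_of_le_of_ne (hmapι_mono hab.le) ?_
    intro he
    have he' : a.map ι = b.map ι := he
    refine hab.ne ?_
    ext x
    constructor
    · intro hx
      exact hab.le hx
    · intro hx
      have hx' : ι x ∈ b.map ι := (LieSubalgebra.mem_map _ _ _).mpr ⟨x, hx, rfl⟩
      rw [← he', LieSubalgebra.mem_map] at hx'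
      obtain ⟨y, hy, hyx⟩ := hx'
      rwa [← hιinj hyx]
  have hcomapπ_strict : StrictMono (fun K : LieSubalgebra k (g ⧸ n) => K.comap π) := by
    intro a b hab
    have hmono : ∀ {s t : LieSubalgebra k (g ⧸ n)}, s ≤ t → s.comap π ≤ t.comap π := by
      intro s t hst x hx
      exact hst hx
    refine lt_of_le_of_ne (hmono hab.le) ?_
    intro he
    have he' : a.comap π = b.comap π := he
    refine hab.ne ?_
    ext x
    obtain ⟨y, rfl⟩ := hπsurj x
    constructor
    · intro hy
      have hy' : y ∈ a.comap π := hy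
      rw [he'] at hy'
      exact hy'
    · intro hy
      have hy' : y ∈ b.comap π := hy
      rw [← he'] at hy'
      exact hy'
  have hconnect : (⊤ : LieSubalgebra k ↥n).map ι = (⊥ : LieSubalgebra k (g ⧸ n)).comap π := by
    ext x
    rw [LieSubalgebra.mem_map]
    constructor
    · rintro ⟨y, -, rfl⟩
      show π (ι y) ∈ (⊥ : LieSubalgebra k (g ⧸ n))
      rw [LieSubalgebra.mem_bot, hπ, lieQuotHom_eq_zero_iff]
      exact y.2
    · intro hx
      have hx' : π x ∈ (⊥ : LieSubalgebra k (g ⧸ n)) := hx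
      rw [LieSubalgebra.mem_bot, hπ, lieQuotHom_eq_zero_iff] at hx'
      exact ⟨⟨x, hx'⟩, LieSubalgebra.mem_top _, rfl⟩
  -- key second-isomorphism style lemma
  have key : ∀ S T : LieSubalgebra k g, S ≤ T → S.comap ι = T.comap ι →
      S.map π = T.map π → S = T := by
    intro S T hST h1 h2
    ext x
    refine ⟨fun hx => hST hx, fun hx => ?_⟩
    have hx' : π x ∈ T.map π := (LieSubalgebra.mem_map _ _ _).mpr ⟨x, hx, rfl⟩
    rw [← h2, LieSubalgebra.mem_map] at hx'
    obtain ⟨y, hy, hyx⟩ := hx'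
    have hxy : x - y ∈ n := by
      rw [← lieQuotHom_eq_zero_iff n]
      show π (x - y) = 0
      rw [map_sub, hyx, sub_self]
    have hxyT : x - y ∈ T := T.sub_mem hx (hST hy)
    have hmem : (⟨x - y, hxy⟩ : ↥n) ∈ T.comap ι := hxyT
    rw [← h1] at hmem
    have hxyS : x - y ∈ S := hmem
    have := S.add_mem hy hxyS
    simpa using this
  apply le_antisymm
  · -- λ(g) ≤ λ(n) + λ(g/n)
    apply sSup_le
    rintro m ⟨mm, rfl, c, hc, h0, h1⟩
    set G : LieSubalgebra k g → LieSubalgebra k ↥n × LieSubalgebra k (g ⧸ n) :=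
      fun S => (S.comap ι, S.map π) with hG
    have hGmono : Monotone G := by
      intro a b hab
      exact ⟨fun x hx => hab hx, hmapπ_mono hab⟩
    have step : ∀ i : Fin mm, G (c i.castSucc) < G (c i.succ) := by
      intro i
      have hlt := hc (Fin.castSucc_lt_succ (i := i))
      refine lt_of_le_of_ne (hGmono hlt.le) ?_
      intro he
      have he1 : (c i.castSucc).comap ι = (c i.succ).comap ι := congrArg Prod.fst he
      have he2 : (c i.castSucc).map π = (c i.succ).map π := congrArg Prod.snd he
      exact hlt.ne (key _ _ hlt.le he1 he2)
    set p : LTSeries (LieSubalgebra k ↥n × LieSubalgebra k (g ⧸ n)) :=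
      ⟨mm, fun i => G (c i), step⟩ with hp
    obtain ⟨q, r, hq1, hq2, hr1, hr2, hlen⟩ := LTSeries.split p
    have hphead : p.head = (⊥, ⊥) := by
      show G (c 0) = _
      rw [h0, hG]
      exact Prod.ext hcomapι_bot hmapπ_bot
    have hplast : p.last = (⊤, ⊤) := by
      show G (c (Fin.last mm)) = _
      rw [h1, hG]
      exact Prod.ext hcomapι_top hmapπ_top
    have hq : (q.length : ℕ∞) ≤ lieChainLength k n :=
      le_lieChainLength q (by rw [hq1, hphead]) (by rw [hq2, hplast])
    have hr : (r.length : ℕ∞) ≤ lieChainLength k (g ⧸ n) :=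
      le_lieChainLength r (by rw [hr1, hphead]) (by rw [hr2, hplast])
    have hlen' : (mm : ℕ∞) ≤ ((q.length + r.length : ℕ) : ℕ∞) := by exact_mod_cast hlen
    calc (mm : ℕ∞) ≤ ((q.length + r.length : ℕ) : ℕ∞) := hlen'
      _ = (q.length : ℕ∞) + (r.length : ℕ∞) := by push_cast; rfl
      _ ≤ lieChainLength k n + lieChainLength k (g ⧸ n) := add_le_add hq hr
  · -- λ(n) + λ(g/n) ≤ λ(g)
    obtain ⟨p, hp0, hp1, hpl⟩ := lieChainLength_spec (k := k) (L := ↥n)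
    obtain ⟨q, hq0, hq1, hql⟩ := lieChainLength_spec (k := k) (L := g ⧸ n)
    set p' : LTSeries (LieSubalgebra k g) :=
      p.map (fun K => K.map ι) hmapι_strict with hp'
    set q' : LTSeries (LieSubalgebra k g) :=
      q.map (fun K => K.comap π) hcomapπ_strict with hq'
    have hconn : p'.last = q'.head := by
      rw [hp', hq', LTSeries.last_map, LTSeries.head_map, hp1, hq0]
      exact hconnect
    set w : LTSeries (LieSubalgebra k g) := RelSeries.smash p' q' hconn with hw
    have hwhead : w.head = ⊥ := by
      rw [hw, RelSeries.head_smash, hp', LTSeries.head_map, hp0]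
      ext x
      rw [LieSubalgebra.mem_map, LieSubalgebra.mem_bot]
      constructor
      · rintro ⟨y, hy, rfl⟩
        rw [LieSubalgebra.mem_bot] at hy
        subst hy
        simp
      · rintro rfl
        exact ⟨0, by simp [LieSubalgebra.mem_bot]⟩
    have hwlast : w.last = ⊤ := by
      rw [hw, RelSeries.last_smash, hq', LTSeries.last_map, hq1]
      ext x
      exact ⟨fun _ => LieSubalgebra.mem_top _, fun _ => LieSubalgebra.mem_top _⟩
    have hwlen : (w.length : ℕ∞) ≤ lieChainLength k g := le_lieChainLength w hwhead hwlast
    have hwl : w.length = p.length + q.length := rfl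
    rw [hpl, hql]
    calc (p.length : ℕ∞) + (q.length : ℕ∞) = ((p.length + q.length : ℕ) : ℕ∞) := by
          push_cast; rfl
      _ = (w.length : ℕ∞) := by rw [hwl]
      _ ≤ lieChainLength k g := hwlen
end

section
/- Let R be a ring, G a finite group, and R*G a crossed product. Then the Jacobson radical of R is contained in the Jacobson radical of R*G, provided J(R) is G-stable (which holds automatically: J(R) is stable under the automorphisms induced by the crossed product structure). More precisely: J(R)·(R*G) is a two-sided ideal of R*G contained in J(R*G). -/
/-- Membership in the Jacobson radical (of `⊥`) in terms of left invertibility. -/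
theorem jb_iff' {A : Type*} [Ring A] {x : A} :
    x ∈ (⊥ : Ideal A).jacobson ↔ ∀ y : A, ∃ z, z * (y * x + 1) = 1 := by
  rw [Ideal.mem_jacobson_iff]
  constructor
  · intro h y
    obtain ⟨z, hz⟩ := h y
    refine ⟨z, ?_⟩
    have h1 : z * y * x + z = 1 := by
      have h2 := sub_eq_zero.1 ((Ideal.mem_bot).1 hz)
      simpa using h2
    rw [mul_add, mul_one, ← mul_assoc]
    exact h1
  · intro h y
    obtain ⟨z, hz⟩ := h y
    refine ⟨z, ?_⟩
    rw [Ideal.mem_bot]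
    have h1 : z * y * x + z = 1 := by
      calc z * y * x + z = z * (y * x + 1) := by rw [mul_add, mul_one, mul_assoc]
        _ = 1 := hz
    rw [h1, sub_self]

/-- The Jacobson radical of `⊥` is closed under right multiplication. -/
theorem jb_mul_right' {A : Type*} [Ring A] {x : A} (hx : x ∈ (⊥ : Ideal A).jacobson) (r : A) :
    x * r ∈ (⊥ : Ideal A).jacobson := by
  rw [jb_iff']
  intro y
  obtain ⟨c, hc⟩ := jb_iff'.1 hx (r * y)
  -- hc : c * (r * y * x + 1) = 1
  refine ⟨1 - y * x * c * r, ?_⟩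
  have expand : (1 - y * x * c * r) * (y * (x * r) + 1)
      = 1 + y * x * r - y * x * (c * (r * y * x + 1)) * r := by noncomm_ring
  rw [expand, hc]
  noncomm_ring

/-- The Jacobson radical of `⊥` is preserved by ring automorphisms. -/
theorem jb_map_equiv' {A : Type*} [Ring A] (φ : A ≃+* A) {x : A}
    (hx : x ∈ (⊥ : Ideal A).jacobson) : φ x ∈ (⊥ : Ideal A).jacobson := by
  rw [jb_iff']
  intro y
  obtain ⟨z, hz⟩ := jb_iff'.1 hx (φ.symm y)
  refine ⟨φ z, ?_⟩
  have h2 := congrArg φ hz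
  simpa [map_mul, map_add, map_one] using h2

/-- let `S = R*G` be a crossed product of a ring `R` by a finite group `G`:
`S` contains `R` (via `ι`), is free as a left `R`-module on a family of units `u g`
(`g ∈ G`), each `u g` normalises `R` (inducing ring automorphisms of `R`), and
`u g · u h ∈ R^× · u (g*h)`.  Then the Jacobson radical of `R` is contained in the Jacobson
radical of `S`; more precisely `S·J(R)·S ⊆ J(S)`. -/
theorem stmt_18 {R S : Type*} [Ring R] [Ring S] (G : Type*) [Group G] [Fintype G]
    (ι : R →+* S) (hι : Function.Injective ι) (u : G → Sˣ)
    (hnormal : ∀ g : G, ∃ φ : R ≃+* R, ∀ r : R, (u g : S) * ι r = ι (φ r) * (u g : S))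
    (hcocycle : ∀ g h : G, ∃ r : Rˣ, (u g : S) * (u h : S) = ι r * (u (g * h) : S))
    (hone : u 1 = 1)
    (hbasis : ∀ s : S, ∃! c : G → R, s = ∑ g : G, ι (c g) * (u g : S)) :
    ∀ x ∈ (⊥ : Ideal R).jacobson, ∀ s t : S, s * ι x * t ∈ (⊥ : Ideal S).jacobson := by
  classical
  intro x hx s t
  choose φ hφ using hnormal
  choose ρ hρ using hcocycle
  -- `Iset` is the set J(R)·S = S·J(R)
  set Iset : S → Prop := fun a => ∃ c : G → R,
      (∀ g, c g ∈ (⊥ : Ideal R).jacobson) ∧ a = ∑ g : G, ι (c g) * (u g : S) with hIset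
  have h0 : Iset 0 := ⟨0, fun g => Ideal.zero_mem _, by simp⟩
  have hadd : ∀ a b : S, Iset a → Iset b → Iset (a + b) := by
    rintro a b ⟨c, hc, rfl⟩ ⟨d, hd, rfl⟩
    refine ⟨c + d, fun g => Ideal.add_mem _ (hc g) (hd g), ?_⟩
    rw [← Finset.sum_add_distrib]
    exact Finset.sum_congr rfl fun g _ => by rw [Pi.add_apply, map_add, add_mul]
  have hsum : ∀ (f : G → S), (∀ g, Iset (f g)) → Iset (∑ g : G, f g) := by
    intro f hf
    exact Finset.sum_induction f Iset hadd h0 (fun g _ => hf g)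
  have hsingle : ∀ (c : R), c ∈ (⊥ : Ideal R).jacobson → ∀ g : G, Iset (ι c * (u g : S)) := by
    intro c hc g
    refine ⟨fun h => if h = g then c else 0, ?_, ?_⟩
    · intro h
      by_cases hh : h = g <;> simp [hh, hc, Ideal.zero_mem]
    · have hterm : ∀ h : G, ι (if h = g then c else 0) * (u h : S)
          = if h = g then ι c * (u h : S) else 0 := by
        intro h
        by_cases hh : h = g <;> simp [hh]
      rw [Finset.sum_congr rfl fun h _ => hterm h, Finset.sum_ite_eq' Finset.univ g
        (fun h => ι c * (u h : S))]
      simp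
  -- the multiplication rule
  have hmul : ∀ (r r' : R) (g g' : G),
      (ι r * (u g : S)) * (ι r' * (u g' : S)) = ι (r * φ g r' * ρ g g') * (u (g * g') : S) := by
    intro r r' g g'
    calc (ι r * (u g : S)) * (ι r' * (u g' : S))
        = ι r * (((u g : S) * ι r') * (u g' : S)) := by rw [mul_assoc, mul_assoc]
      _ = ι r * ((ι (φ g r') * (u g : S)) * (u g' : S)) := by rw [hφ g r']
      _ = ι r * (ι (φ g r') * ((u g : S) * (u g' : S))) := by rw [mul_assoc]
      _ = ι r * (ι (φ g r') * (ι (ρ g g') * (u (g * g') : S))) := by rw [hρ g g']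
      _ = ι (r * φ g r' * ρ g g') * (u (g * g') : S) := by
          rw [map_mul, map_mul]; noncomm_ring
  have hleft : ∀ a : S, Iset a → ∀ w : S, Iset (w * a) := by
    rintro a ⟨c, hc, rfl⟩ w
    obtain ⟨d, hd, -⟩ := hbasis w
    rw [Finset.mul_sum]
    refine hsum _ fun g => ?_
    rw [hd, Finset.sum_mul]
    refine hsum _ fun h => ?_
    rw [hmul]
    exact hsingle _ (jb_mul_right' (Ideal.mul_mem_left _ _ (jb_map_equiv' (φ h) (hc g))) _) _
  have hright : ∀ a : S, Iset a → ∀ w : S, Iset (a * w) := by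
    rintro a ⟨c, hc, rfl⟩ w
    obtain ⟨d, hd, -⟩ := hbasis w
    rw [Finset.sum_mul]
    refine hsum _ fun g => ?_
    rw [hd, Finset.mul_sum]
    refine hsum _ fun h => ?_
    rw [hmul]
    exact hsingle _ (jb_mul_right' (jb_mul_right' (hc g) _) _) _
  have hιmem : Iset (ι x) := by
    have h1 : ι x = ι x * (u 1 : S) := by rw [hone, Units.val_one, mul_one]
    rw [h1]
    exact hsingle x hx 1
  -- splitting off one coordinate of a sum
  have hsplit : ∀ (c : G → R) (h₀ : G), ∑ h : G, ι (c h) * (u h : S)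
      = ι (c h₀) * (u h₀ : S) + ∑ h : G, ι (Function.update c h₀ 0 h) * (u h : S) := by
    intro c h₀
    rw [← Finset.add_sum_erase Finset.univ (fun h => ι (c h) * (u h : S)) (Finset.mem_univ h₀),
      ← Finset.add_sum_erase Finset.univ (fun h => ι (Function.update c h₀ 0 h) * (u h : S))
        (Finset.mem_univ h₀)]
    congr 1
    rw [Function.update_self, map_zero, zero_mul, zero_add]
    exact Finset.sum_congr rfl fun h hh =>
      by rw [Function.update_of_ne (Finset.ne_of_mem_erase hh)]
  -- the Nakayama-style argument: 1 + a is left invertible for a ∈ Iset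
  have hquasi : ∀ a : S, Iset a → ∃ b : S, b * (1 + a) = 1 := by
    intro a ha
    set Q : Finset G → Prop := fun T => ∀ g : G, ∃ (b : S) (c : G → R),
        (∀ h, c h ∈ (⊥ : Ideal R).jacobson) ∧ (∀ h, h ∉ T → c h = 0) ∧
        (u g : S) = b * (1 + a) + ∑ h : G, ι (c h) * (u h : S) with hQ
    have Quniv : Q Finset.univ := by
      intro g
      obtain ⟨c, hc, hceq⟩ := hleft a ha (u g : S)
      refine ⟨(u g : S), fun h => -(c h), fun h => neg_mem (hc h),
        fun h hh => absurd (Finset.mem_univ h) hh, ?_⟩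
      have hneg : ∑ h : G, ι (-(c h)) * (u h : S) = -((u g : S) * a) := by
        rw [hceq, ← Finset.sum_neg_distrib]
        exact Finset.sum_congr rfl fun h _ => by rw [map_neg, neg_mul]
      rw [hneg]
      noncomm_ring
    have Qstep : ∀ (h₀ : G) (T : Finset G), Q (insert h₀ T) → Q T := by
      intro h₀ T hQT
      -- first extract an expression for u h₀ with coefficients supported in T
      obtain ⟨b₀, c₀, hc₀N, hc₀supp, hrel⟩ := hQT h₀
      have hrel' : (u h₀ : S) = b₀ * (1 + a) + (ι (c₀ h₀) * (u h₀ : S)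
          + ∑ h : G, ι (Function.update c₀ h₀ 0 h) * (u h : S)) := by
        rw [hsplit c₀ h₀] at hrel; exact hrel
      -- invert 1 - c₀ h₀ on the left
      obtain ⟨v, hv⟩ := jb_iff'.1 (hc₀N h₀) (-1)
      have hv' : v * (1 - c₀ h₀) = 1 := by
        have he : (-1 : R) * c₀ h₀ + 1 = 1 - c₀ h₀ := by
          rw [neg_one_mul, neg_add_eq_sub]
        rwa [he] at hv
      have hiso : ι (1 - c₀ h₀) * (u h₀ : S) = b₀ * (1 + a)
          + ∑ h : G, ι (Function.update c₀ h₀ 0 h) * (u h : S) := by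
        have e : (u h₀ : S) - ι (c₀ h₀) * (u h₀ : S) = b₀ * (1 + a)
            + ∑ h : G, ι (Function.update c₀ h₀ 0 h) * (u h : S) := by
          nth_rewrite 1 [hrel']
          abel
        rw [map_sub, map_one, sub_mul, one_mul, e]
      have ustar : (u h₀ : S) = (ι v * b₀) * (1 + a)
          + ∑ h : G, ι (v * Function.update c₀ h₀ 0 h) * (u h : S) := by
        calc (u h₀ : S) = ι v * (ι (1 - c₀ h₀) * (u h₀ : S)) := by
              rw [← mul_assoc, ← map_mul, hv', map_one, one_mul]
          _ = ι v * (b₀ * (1 + a)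
              + ∑ h : G, ι (Function.update c₀ h₀ 0 h) * (u h : S)) := by rw [hiso]
          _ = (ι v * b₀) * (1 + a)
              + ∑ h : G, ι (v * Function.update c₀ h₀ 0 h) * (u h : S) := by
              rw [mul_add, ← mul_assoc, Finset.mul_sum]
              congr 1
              exact Finset.sum_congr rfl fun h _ => by rw [← mul_assoc, ← map_mul]
      -- properties of the new coefficients for u h₀
      have heN : ∀ h, v * Function.update c₀ h₀ 0 h ∈ (⊥ : Ideal R).jacobson := by
        intro h
        refine Ideal.mul_mem_left _ _ ?_
        by_cases hh : h = h₀
        · subst hh; rw [Function.update_self]; exact Ideal.zero_mem _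
        · rw [Function.update_of_ne hh]; exact hc₀N h
      have heT : ∀ h, h ∉ T → v * Function.update c₀ h₀ 0 h = 0 := by
        intro h hh
        by_cases hh0 : h = h₀
        · subst hh0; rw [Function.update_self, mul_zero]
        · rw [Function.update_of_ne hh0, hc₀supp h (by simp [hh, hh0]), mul_zero]
      -- now handle a general g
      intro g
      obtain ⟨b, c, hcN, hcsupp, hrelg⟩ := hQT g
      have hrelg' : (u g : S) = b * (1 + a) + (ι (c h₀) * (u h₀ : S)
          + ∑ h : G, ι (Function.update c h₀ 0 h) * (u h : S)) := by
        rw [hsplit c h₀] at hrelg; exact hrelg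
      rw [ustar] at hrelg'
      refine ⟨b + ι (c h₀) * (ι v * b₀),
        fun h => Function.update c h₀ 0 h + c h₀ * (v * Function.update c₀ h₀ 0 h),
        ?_, ?_, ?_⟩
      · intro h
        dsimp only
        refine Ideal.add_mem _ ?_ (Ideal.mul_mem_left _ _ (heN h))
        by_cases hh : h = h₀
        · subst hh; rw [Function.update_self]; exact Ideal.zero_mem _
        · rw [Function.update_of_ne hh]; exact hcN h
      · intro h hh
        dsimp only
        by_cases hh0 : h = h₀
        · subst hh0
          rw [Function.update_self, heT _ hh, mul_zero, add_zero]
        · rw [Function.update_of_ne hh0, heT _ hh, mul_zero, add_zero,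
            hcsupp h (by simp [hh, hh0])]
      · dsimp only
        rw [hrelg']
        have hpush : ι (c h₀) * ((ι v * b₀) * (1 + a)
            + ∑ h : G, ι (v * Function.update c₀ h₀ 0 h) * (u h : S))
            = (ι (c h₀) * (ι v * b₀)) * (1 + a)
            + ∑ h : G, ι (c h₀ * (v * Function.update c₀ h₀ 0 h)) * (u h : S) := by
          rw [mul_add, ← mul_assoc, Finset.mul_sum]
          congr 1
          exact Finset.sum_congr rfl fun h _ => by rw [← mul_assoc, ← map_mul]
        rw [hpush]
        have hsplit2 : ∑ h : G, ι (Function.update c h₀ 0 h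
            + c h₀ * (v * Function.update c₀ h₀ 0 h)) * (u h : S)
            = ∑ h : G, ι (Function.update c h₀ 0 h) * (u h : S)
            + ∑ h : G, ι (c h₀ * (v * Function.update c₀ h₀ 0 h)) * (u h : S) := by
          rw [← Finset.sum_add_distrib]
          exact Finset.sum_congr rfl fun h _ => by rw [map_add, add_mul]
        rw [hsplit2, add_mul]
        abel
    have Qdown : ∀ T : Finset G, Q T → Q ∅ := by
      intro T
      induction T using Finset.induction_on with
      | empty => exact id
      | insert _ _ hnotmem ih => exact fun hQT => ih (Qstep _ _ hQT)
    obtain ⟨b, c, hcN, hc0, heq⟩ := Qdown Finset.univ Quniv 1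
    have hczero : ∀ h : G, c h = 0 := fun h => hc0 h (Finset.notMem_empty h)
    have hsum0 : ∑ h : G, ι (c h) * (u h : S) = 0 := by
      refine Finset.sum_eq_zero fun h _ => ?_
      rw [hczero h, map_zero, zero_mul]
    rw [hone, Units.val_one, hsum0, add_zero] at heq
    exact ⟨b, heq.symm⟩
  -- conclude
  have hmem : Iset (s * ι x * t) := hright _ (hleft _ hιmem s) t
  rw [jb_iff']
  intro y
  obtain ⟨b, hb⟩ := hquasi _ (hleft _ hmem y)
  exact ⟨b, by rwa [add_comm] at hb⟩
end
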